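/- arXiv:1501.06533 — 8 statements merged into one kernel-verified Lean document; each statement's English description precedes it below -/
import Mathlib

section
/- If h = m·r with m, r ≥ 1, A is a finite subset of an abelian group G with |A| = k and 1 ≤ h ≤ r·k, then h^(r)A = r·(m^∧A), i.e., the generalized h-fold sumset with repetition bound r equals the r-fold sumset of the m-fold restricted sumset of A. -/
open Finset Pointwise

/-- The generalized sumset `h^(r)A`: sums of `h` elements of `A`,
each element used at most `r` times. -/
def genSum {G : Type*} [AddCommGroup G] (r h : ℕ) (A : Finset G) : Set G :=
  {x | ∃ c : G → ℕ, (∀ a, c a ≤ r) ∧ (∀ a, c a ≠ 0 → a ∈ A) ∧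
    (∑ a ∈ A, c a) = h ∧ (∑ a ∈ A, c a • a) = x}

/-- The `r`-fold ordinary sumset `B + ⋯ + B` of a set `B`. -/
def iterSum {G : Type*} [AddCommGroup G] (r : ℕ) (B : Set G) : Set G :=
  {x | ∃ f : Fin r → G, (∀ i, f i ∈ B) ∧ (∑ i, f i) = x}

/-- A set of integers is an arithmetic progression. -/
def IsAPSet (S : Set ℤ) : Prop :=
  ∃ a d : ℤ, ∃ n : ℕ, 0 < d ∧ S = ↑((Finset.range n).image fun i : ℕ => a + d * (i : ℤ))

lemma decomp {G : Type*} (A : Finset G) (m : ℕ) :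
    ∀ r (c : G → ℕ), (∀ a, c a ≤ r) → (∀ a, c a ≠ 0 → a ∈ A) →
    (∑ a ∈ A, c a) = m * r →
    ∃ f : Fin r → G → ℕ, (∀ i a, f i a ≤ 1) ∧ (∀ i a, f i a ≠ 0 → a ∈ A) ∧
      (∀ i, ∑ a ∈ A, f i a = m) ∧ (∀ a, ∑ i, f i a = c a) := by
  classical
  intro r
  induction r with
  | zero =>
    intro c hle _ _
    exact ⟨Fin.elim0, fun i => i.elim0, fun i => i.elim0, fun i => i.elim0,
      fun a => by simpa using (Nat.le_zero.mp (hle a)).symm⟩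
  | succ r ih =>
    intro c hle hsupp hsum
    set Supp : Finset G := A.filter (fun a => c a ≠ 0) with hSupp
    set T : Finset G := A.filter (fun a => c a = r + 1) with hT
    have hTS : T ⊆ Supp := by
      intro a ha
      simp only [hT, hSupp, mem_filter] at ha ⊢
      exact ⟨ha.1, by omega⟩
    have hSA : Supp ⊆ A := filter_subset _ _
    have hsum' : ∑ a ∈ Supp, c a = m * (r + 1) := by
      rw [hSupp, Finset.sum_filter_of_ne (fun a _ h => h), hsum]
    have hSupp_card : m ≤ Supp.card := by
      have : ∑ a ∈ Supp, c a ≤ Supp.card * (r + 1) :=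
        Finset.sum_le_card_nsmul _ _ _ (fun a _ => hle a)
      rw [hsum'] at this
      exact Nat.le_of_mul_le_mul_right this (Nat.succ_pos r)
    have hT_card : T.card ≤ m := by
      have h1 : T.card * (r + 1) = ∑ a ∈ T, c a := by
        rw [Finset.sum_congr rfl (fun a ha => (mem_filter.mp ha).2)]
        simp [mul_comm, hT]
      have h2 : ∑ a ∈ T, c a ≤ ∑ a ∈ Supp, c a :=
        Finset.sum_le_sum_of_subset hTS
      rw [hsum', ← h1] at h2
      exact Nat.le_of_mul_le_mul_right h2 (Nat.succ_pos r)
    obtain ⟨u, hTu, huS, hucard⟩ := Finset.exists_subsuperset_card_eq hTS hT_card hSupp_card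
    have huA : u ⊆ A := huS.trans hSA
    set c' : G → ℕ := fun a => c a - (if a ∈ u then 1 else 0) with hc'
    have hadd : ∀ a ∈ A, c' a + (if a ∈ u then 1 else 0) = c a := by
      intro a _
      by_cases hau : a ∈ u
      · have : c a ≠ 0 := (mem_filter.mp (huS hau)).2
        simp [hc', hau]; omega
      · simp [hc', hau]
    have hind : ∑ a ∈ A, (if a ∈ u then 1 else 0) = m := by
      rw [Finset.sum_ite_mem, Finset.inter_eq_right.mpr huA]
      simpa using hucard
    have hsum'' : ∑ a ∈ A, c' a = m * r := by
      have h3 := Finset.sum_congr rfl hadd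
      rw [Finset.sum_add_distrib, hsum, Nat.mul_succ] at h3
      omega
    have hle' : ∀ a, c' a ≤ r := by
      intro a
      by_cases hau : a ∈ u
      · have := hle a; simp [hc', hau]; omega
      · by_cases haA : a ∈ A
        · have : c a ≠ r + 1 := fun h => hau (hTu (mem_filter.mpr ⟨haA, h⟩))
          have := hle a; simp [hc', hau]; omega
        · have : c a = 0 := by by_contra h; exact haA (hsupp a h)
          simp [hc', this]
    have hsupp' : ∀ a, c' a ≠ 0 → a ∈ A := by
      intro a ha
      apply hsupp a
      intro h; apply ha; simp [hc', h]
    obtain ⟨f, hf1, hf2, hf3, hf4⟩ := ih c' hle' hsupp' hsum''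
    refine ⟨Fin.cons (fun a => if a ∈ u then 1 else 0) f, ?_, ?_, ?_, ?_⟩
    · intro i a
      refine Fin.cases ?_ ?_ i
      · simp; split <;> omega
      · intro j; simpa using hf1 j a
    · intro i a
      refine Fin.cases ?_ ?_ i
      · simp only [Fin.cons_zero]
        split
        · intro _; exact huA ‹a ∈ u›
        · simp
      · intro j; simpa using hf2 j a
    · intro i
      refine Fin.cases ?_ ?_ i
      · simpa using hind
      · intro j; simpa using hf3 j
    · intro a
      rw [Fin.sum_univ_succ]
      simp only [Fin.cons_zero, Fin.cons_succ, hf4]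
      by_cases hau : a ∈ u
      · have : c a ≠ 0 := (mem_filter.mp (huS hau)).2
        simp [hc', hau]; omega
      · simp [hc', hau]

theorem stmt0 {G : Type*} [AddCommGroup G] (A : Finset G) (k h m r : ℕ)
    (hA : A.card = k) (hm : 1 ≤ m) (hr : 1 ≤ r) (hh : h = m * r)
    (h1 : 1 ≤ h) (h2 : h ≤ r * k) :
    genSum r h A = iterSum r (genSum 1 m A) := by
  ext x
  constructor
  · rintro ⟨c, hle, hsupp, hsum, hx⟩
    obtain ⟨f, hf1, hf2, hf3, hf4⟩ := decomp A m r c hle hsupp (by rw [hsum, hh])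
    refine ⟨fun i => ∑ a ∈ A, f i a • a, fun i => ⟨f i, hf1 i, hf2 i, hf3 i, rfl⟩, ?_⟩
    rw [Finset.sum_comm, ← hx]
    refine Finset.sum_congr rfl fun a _ => ?_
    rw [← Finset.sum_smul, hf4]
  · rintro ⟨F, hF, hx⟩
    choose c hc1 hc2 hc3 hc4 using hF
    refine ⟨fun a => ∑ i, c i a, ?_, ?_, ?_, ?_⟩
    · intro a
      calc ∑ i, c i a ≤ ∑ _i : Fin r, 1 := Finset.sum_le_sum fun i _ => hc1 i a
        _ = r := by simp
    · intro a ha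
      obtain ⟨i, hi⟩ := Finset.exists_ne_zero_of_sum_ne_zero ha
      exact hc2 i a hi.2
    · rw [Finset.sum_comm]
      simp_rw [hc3]
      simp [hh, mul_comm]
    · rw [← hx]
      have h3 : ∀ a ∈ A, (fun a => ∑ i, c i a) a • a = ∑ i, c i a • a :=
        fun a _ => Finset.sum_smul
      rw [Finset.sum_congr rfl h3, Finset.sum_comm]
      exact Finset.sum_congr rfl fun i _ => hc4 i
end

section
/- Let h, r ≥ 1 be integers with h = m·r + ε where 0 ≤ ε ≤ r−1, and let A be a nonempty finite set of integers with |A| = k and 1 ≤ h ≤ r·k. Then |h^(r)A| ≥ h·k − m²·r + 1 − 2·m·ε − ε. -/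
open Finset Pointwise

open Finset

namespace GSAux

/-- initial position of unit `u` (0-indexed). -/
def pu (r u : ℕ) : ℕ := u / r

/-- co-position of unit `u` from the top. -/
def eu (r h u : ℕ) : ℕ := (h - 1 - u) / r

/-- displacement of unit `u`. -/
def du (r h k u : ℕ) : ℕ := k - 1 - eu r h u - pu r u

/-- total displacement remaining for units `≥ u`. -/
def tt (r h k u : ℕ) : ℕ := ∑ v ∈ Finset.Ico u h, du r h k v

/-- position of unit `u` at time `t`. -/
def pos (r h k t u : ℕ) : ℕ := pu r u + min (du r h k u) (t - tt r h k (u + 1))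

variable {r h k : ℕ}

lemma pe (hr : 1 ≤ r) (hrk : h ≤ r * k) {u : ℕ} (hu : u < h) :
    pu r u + eu r h u ≤ k - 1 := by
  have hk1 : 1 ≤ k := by
    rcases Nat.eq_zero_or_pos k with hk | hk
    · subst hk; omega
    · exact hk
  have a1 : pu r u * r ≤ u := Nat.div_mul_le_self u r
  have a2 : eu r h u * r ≤ h - 1 - u := Nat.div_mul_le_self _ r
  have h1 : (pu r u + eu r h u) * r ≤ h - 1 := by
    rw [Nat.add_mul]; omega
  have h2 : pu r u + eu r h u ≤ (h - 1) / r := (Nat.le_div_iff_mul_le hr).mpr h1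
  have h3 : (h - 1) / r < k := by
    rw [Nat.div_lt_iff_lt_mul hr]
    calc h - 1 < h := by omega
    _ ≤ k * r := by rw [Nat.mul_comm]; exact hrk
  omega

lemma q_eq (hr : 1 ≤ r) (hrk : h ≤ r * k) {u : ℕ} (hu : u < h) :
    pu r u + du r h k u = k - 1 - eu r h u := by
  have := pe hr hrk hu
  unfold du
  omega

lemma pos_le (hr : 1 ≤ r) (hrk : h ≤ r * k) {u : ℕ} (hu : u < h) (t : ℕ) :
    pos r h k t u ≤ k - 1 - eu r h u := by
  have := q_eq (k := k) hr hrk hu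
  unfold pos
  omega

lemma pos_lt_k (hr : 1 ≤ r) (hrk : h ≤ r * k) (hk1 : 1 ≤ k) {u : ℕ} (hu : u < h) (t : ℕ) :
    pos r h k t u < k := by
  have := pos_le (k := k) hr hrk hu t
  omega

lemma tt_eq {u : ℕ} (hu : u < h) : tt r h k u = du r h k u + tt r h k (u + 1) := by
  unfold tt
  rw [← Finset.sum_Ico_consecutive (fun v => du r h k v) (Nat.le_succ u) hu,
    Nat.Ico_succ_singleton, Finset.sum_singleton]

lemma tt_anti {u v : ℕ} (huv : u ≤ v) : tt r h k v ≤ tt r h k u :=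
  Finset.sum_le_sum_of_subset (Finset.Ico_subset_Ico huv le_rfl)

lemma tt_zero {u : ℕ} (hu : h ≤ u) : tt r h k u = 0 := by
  unfold tt
  rw [Finset.Ico_eq_empty (by omega), Finset.sum_empty]

lemma eu_anti {u v : ℕ} (huv : u ≤ v) : eu r h v ≤ eu r h u :=
  Nat.div_le_div_right (by omega)

lemma pos_mono (hr : 1 ≤ r) (hrk : h ≤ r * k) (t : ℕ) {u v : ℕ}
    (huv : u ≤ v) (hv : v < h) : pos r h k t u ≤ pos r h k t v := by
  rcases Nat.eq_or_lt_of_le huv with rfl | hlt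
  · exact le_rfl
  have hu : u < h := lt_trans hlt hv
  by_cases ht : t ≤ tt r h k (u + 1)
  · have hp : pu r u ≤ pu r v := Nat.div_le_div_right huv
    unfold pos
    omega
  · have h5 : tt r h k v ≤ tt r h k (u + 1) := tt_anti hlt
    have h6 : tt r h k v = du r h k v + tt r h k (v + 1) := tt_eq hv
    have hqu := q_eq (k := k) hr hrk hu
    have hqv := q_eq (k := k) hr hrk hv
    have he : eu r h v ≤ eu r h u := eu_anti (le_of_lt hlt)
    have hpu := pe hr hrk hu
    have hpv := pe hr hrk hv
    unfold pos
    omega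

lemma pos_strict (hr : 1 ≤ r) (hrk : h ≤ r * k) (t : ℕ) {u v : ℕ}
    (huv : u + r ≤ v) (hv : v < h) : pos r h k t u < pos r h k t v := by
  have hu : u < h := by omega
  by_cases ht : t ≤ tt r h k (u + 1)
  · have hp1 : (u + r) / r = u / r + 1 := Nat.add_div_right u hr
    have hp : pu r (u + r) ≤ pu r v := Nat.div_le_div_right huv
    unfold pos pu at *
    omega
  · have h5 : tt r h k v ≤ tt r h k (u + 1) := tt_anti (by omega)
    have h6 : tt r h k v = du r h k v + tt r h k (v + 1) := tt_eq hv
    have hqu := q_eq (k := k) hr hrk hu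
    have hqv := q_eq (k := k) hr hrk hv
    have hpu := pe hr hrk hu
    have hpv := pe hr hrk hv
    -- eu v < eu u
    have hN : r ≤ h - 1 - u := by omega
    have he : eu r h v < eu r h u := by
      have hdiv : (h - 1 - u) / r = (h - 1 - u - r) / r + 1 := Nat.div_eq_sub_div hr hN
      have he2 : (h - 1 - v) / r ≤ (h - 1 - u - r) / r := Nat.div_le_div_right (by omega)
      unfold eu
      omega
    unfold pos
    omega

lemma exists_active (t : ℕ) (ht : t < tt r h k 0) :
    ∃ w, w < h ∧ tt r h k (w + 1) ≤ t ∧ t < tt r h k w := by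
  classical
  set P : ℕ → Prop := fun u => t < tt r h k u with hP
  have hP0 : P 0 := ht
  set w := Nat.findGreatest P h with hw
  have hspec : P w := Nat.findGreatest_spec (Nat.zero_le h) hP0
  have hwle : w ≤ h := Nat.findGreatest_le h
  have hwh : w < h := by
    rcases Nat.eq_or_lt_of_le hwle with heq | hlt
    · exfalso
      have : tt r h k h = 0 := tt_zero le_rfl
      rw [hP, heq] at hspec
      omega
    · exact hlt
  have hnext : ¬ P (w + 1) := Nat.findGreatest_is_greatest (Nat.lt_succ_self w) (by omega)
  exact ⟨w, hwh, by simpa [hP] using hnext, hspec⟩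

lemma pos_step (hr : 1 ≤ r) (hrk : h ≤ r * k) {t : ℕ} (ht : t < tt r h k 0) :
    ∃ w, w < h ∧ pos r h k (t + 1) w = pos r h k t w + 1 ∧
      pos r h k t w + 1 ≤ k - 1 - eu r h w ∧
      ∀ u, u < h → u ≠ w → pos r h k (t + 1) u = pos r h k t u := by
  obtain ⟨w, hwh, hw1, hw2⟩ := exists_active (r := r) (h := h) (k := k) t ht
  have hsplit : tt r h k w = du r h k w + tt r h k (w + 1) := tt_eq hwh
  refine ⟨w, hwh, ?_, ?_, ?_⟩
  · unfold pos
    omega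
  · have := pos_le (k := k) hr hrk hwh (t + 1)
    have heq : pos r h k (t + 1) w = pos r h k t w + 1 := by unfold pos; omega
    omega
  · intro u hu hne
    rcases Nat.lt_or_ge u w with hlt | hge
    · have : tt r h k w ≤ tt r h k (u + 1) := tt_anti (by omega)
      unfold pos
      omega
    · have hgt : w < u := by omega
      have h7 : tt r h k u ≤ tt r h k (w + 1) := tt_anti (by omega)
      have h8 : tt r h k u = du r h k u + tt r h k (u + 1) := tt_eq hu
      unfold pos
      omega

lemma sum_div (hr : 1 ≤ r) :
    ∀ m ε : ℕ, ε < r →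
      ∑ u ∈ Finset.range (m * r + ε), u / r = r * (∑ i ∈ Finset.range m, i) + ε * m := by
  intro m
  induction m with
  | zero =>
    intro ε hε
    simp only [Nat.zero_mul, Nat.zero_add, Finset.range_zero, Finset.sum_empty,
      Nat.mul_zero, Nat.add_zero]
    refine Finset.sum_eq_zero fun u hu => Nat.div_eq_of_lt ?_
    have := Finset.mem_range.mp hu
    omega
  | succ n ih =>
    intro ε hε
    have key : (n + 1) * r + ε = (n * r + ε) + r := by ring
    have hsplit1 : ∑ u ∈ Finset.range ((n * r + ε) + r), u / r
        = ∑ u ∈ Finset.range (n * r + ε), u / r + ∑ u ∈ Finset.Ico (n * r + ε) ((n * r + ε) + r), u / r := by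
      simp only [Finset.range_eq_Ico]
      rw [← Finset.sum_Ico_consecutive (fun u => u / r) (Nat.zero_le _) (Nat.le_add_right _ _)]
    have hmid : (n * r + ε) ≤ (n + 1) * r := by
      have : (n + 1) * r = n * r + r := by ring
      omega
    have hmid2 : (n + 1) * r ≤ (n * r + ε) + r := by
      have : (n + 1) * r = n * r + r := by ring
      omega
    have hsplit2 : ∑ u ∈ Finset.Ico (n * r + ε) ((n * r + ε) + r), u / r
        = ∑ u ∈ Finset.Ico (n * r + ε) ((n + 1) * r), u / r
          + ∑ u ∈ Finset.Ico ((n + 1) * r) ((n * r + ε) + r), u / r := by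
      rw [Finset.sum_Ico_consecutive (fun u => u / r) hmid hmid2]
    have hc1 : ∑ u ∈ Finset.Ico (n * r + ε) ((n + 1) * r), u / r
        = ((n + 1) * r - (n * r + ε)) * n := by
      rw [Finset.sum_congr rfl (fun u hu => ?_), Finset.sum_const, Nat.card_Ico, smul_eq_mul]
      have hu' := Finset.mem_Ico.mp hu
      exact Nat.div_eq_of_lt_le (by omega) hu'.2
    have hc2 : ∑ u ∈ Finset.Ico ((n + 1) * r) ((n * r + ε) + r), u / r
        = ((n * r + ε) + r - (n + 1) * r) * (n + 1) := by
      rw [Finset.sum_congr rfl (fun u hu => ?_), Finset.sum_const, Nat.card_Ico, smul_eq_mul]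
      have hu' := Finset.mem_Ico.mp hu
      refine Nat.div_eq_of_lt_le hu'.1 ?_
      have : (n + 1 + 1) * r = n * r + r + r := by ring
      omega
    have hlen1 : (n + 1) * r - (n * r + ε) = r - ε := by
      have : (n + 1) * r = n * r + r := by ring
      omega
    have hlen2 : (n * r + ε) + r - (n + 1) * r = ε := by
      have : (n + 1) * r = n * r + r := by ring
      omega
    rw [key, hsplit1, hsplit2, hc1, hc2, hlen1, hlen2, ih ε hε,
      Finset.sum_range_succ]
    have hre : (r - ε) * n + ε = r * n - ε * n + ε := by
      rw [Nat.sub_mul]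
    have hge : ε * n ≤ r * n := Nat.mul_le_mul_right n (le_of_lt hε)
    have expand : r * (∑ i ∈ Finset.range n, i + n) = r * ∑ i ∈ Finset.range n, i + r * n := by ring
    rw [expand]
    have : ε * (n + 1) = ε * n + ε := by ring
    omega

end GSAux

theorem stmt1 (A : Finset ℤ) (k h m r ε : ℕ)
    (hA : A.Nonempty) (hk : A.card = k) (hr : 1 ≤ r)
    (hh : h = m * r + ε) (hε : ε ≤ r - 1)
    (h1 : 1 ≤ h) (h2 : h ≤ r * k) :
    ((genSum r h A).ncard : ℤ) ≥
      (h : ℤ) * k - (m : ℤ) ^ 2 * r + 1 - 2 * m * ε - ε := by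
  classical
  have hk1 : 1 ≤ k := by
    have := Finset.card_pos.mpr hA
    omega
  have hε' : ε < r := by omega
  set f := A.orderEmbOfFin hk with hf
  set a : ℕ → ℤ := fun i => if hi : i < k then f ⟨i, hi⟩ else 0 with ha
  have ha_mem : ∀ i, i < k → a i ∈ A := by
    intro i hi
    simp only [ha, dif_pos hi]
    exact A.orderEmbOfFin_mem hk ⟨i, hi⟩
  have ha_mono : ∀ i j, i < j → j < k → a i < a j := by
    intro i j hij hj
    have hi : i < k := lt_trans hij hj
    simp only [ha, dif_pos hi, dif_pos hj]
    exact (A.orderEmbOfFin hk).strictMono (show (⟨i, hi⟩ : Fin k) < ⟨j, hj⟩ from hij)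
  set D := GSAux.tt r h k 0 with hD
  set s : ℕ → ℤ := fun t => ∑ u ∈ Finset.range h, a (GSAux.pos r h k t u) with hs
  -- each s t is in the generalized sumset
  have hmem : ∀ t, s t ∈ genSum r h A := by
    intro t
    have hmaps : ∀ u ∈ Finset.range h, a (GSAux.pos r h k t u) ∈ A := fun u hu =>
      ha_mem _ (GSAux.pos_lt_k hr h2 hk1 (Finset.mem_range.mp hu) t)
    refine ⟨fun x => ((Finset.range h).filter (fun u => a (GSAux.pos r h k t u) = x)).card,
      ?_, ?_, ?_, ?_⟩
    · intro x
      show ((Finset.range h).filter (fun u => a (GSAux.pos r h k t u) = x)).card ≤ r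
      set F := (Finset.range h).filter (fun u => a (GSAux.pos r h k t u) = x) with hF
      rcases F.eq_empty_or_nonempty with hemp | hne
      · rw [hemp]
        simp
      · set u0 := F.min' hne with hu0
        have hu0F : u0 ∈ F := F.min'_mem hne
        have hu0h : u0 < h := Finset.mem_range.mp (Finset.mem_filter.mp hu0F).1
        have hsub : F ⊆ Finset.Ico u0 (u0 + r) := by
          intro u huF
          have hle1 : u0 ≤ u := F.min'_le u huF
          have huh : u < h := Finset.mem_range.mp (Finset.mem_filter.mp huF).1
          refine Finset.mem_Ico.mpr ⟨hle1, ?_⟩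
          by_contra hcon
          have hle : u0 + r ≤ u := by omega
          have hplt := GSAux.pos_strict (k := k) hr h2 t hle huh
          have p2 : GSAux.pos r h k t u < k := GSAux.pos_lt_k hr h2 hk1 huh t
          have hval : a (GSAux.pos r h k t u0) < a (GSAux.pos r h k t u) :=
            ha_mono _ _ hplt p2
          have e1 : a (GSAux.pos r h k t u0) = x := (Finset.mem_filter.mp hu0F).2
          have e2 : a (GSAux.pos r h k t u) = x := (Finset.mem_filter.mp huF).2
          rw [e1, e2] at hval
          exact lt_irrefl x hval
        calc F.card ≤ (Finset.Ico u0 (u0 + r)).card := Finset.card_le_card hsub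
          _ = r := by rw [Nat.card_Ico]; omega
    · intro x hx
      obtain ⟨u, hu⟩ := Finset.card_pos.mp (Nat.pos_of_ne_zero hx)
      have hu' := Finset.mem_filter.mp hu
      exact hu'.2 ▸ hmaps u hu'.1
    · rw [← Finset.card_eq_sum_card_fiberwise hmaps, Finset.card_range]
    · have hconst : ∀ x ∈ A,
          ((Finset.range h).filter (fun u => a (GSAux.pos r h k t u) = x)).card • x
          = ∑ u ∈ (Finset.range h).filter (fun u => a (GSAux.pos r h k t u) = x),
              a (GSAux.pos r h k t u) := by
        intro x hx
        rw [Finset.sum_congr rfl (fun u hu => (Finset.mem_filter.mp hu).2),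
          Finset.sum_const]
      rw [Finset.sum_congr rfl hconst,
        Finset.sum_fiberwise_of_maps_to hmaps (fun u => a (GSAux.pos r h k t u))]
  -- strict increase of s
  have hstep : ∀ t, t < D → s t < s (t + 1) := by
    intro t ht
    obtain ⟨w, hwh, hw1, hw2, hw3⟩ := GSAux.pos_step (k := k) hr h2 ht
    have hmem' : w ∈ Finset.range h := Finset.mem_range.mpr hwh
    have hrw1 : s t = a (GSAux.pos r h k t w)
        + ∑ u ∈ (Finset.range h).erase w, a (GSAux.pos r h k t u) :=
      (Finset.add_sum_erase _ (fun u => a (GSAux.pos r h k t u)) hmem').symm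
    have hrw2 : s (t + 1) = a (GSAux.pos r h k (t + 1) w)
        + ∑ u ∈ (Finset.range h).erase w, a (GSAux.pos r h k (t + 1) u) :=
      (Finset.add_sum_erase _ (fun u => a (GSAux.pos r h k (t + 1) u)) hmem').symm
    have hrest : ∑ u ∈ (Finset.range h).erase w, a (GSAux.pos r h k (t + 1) u)
        = ∑ u ∈ (Finset.range h).erase w, a (GSAux.pos r h k t u) := by
      refine Finset.sum_congr rfl fun u hu => ?_
      rw [hw3 u (Finset.mem_range.mp (Finset.mem_of_mem_erase hu)) (Finset.ne_of_mem_erase hu)]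
    rw [hrw1, hrw2, hrest, hw1]
    have hlt : GSAux.pos r h k t w + 1 < k := by
      have hee := hw2
      omega
    exact add_lt_add_left (ha_mono _ _ (Nat.lt_succ_self _) hlt) _
  have hchain : ∀ t2 t1, t1 < t2 → t2 ≤ D → s t1 < s t2 := by
    intro t2
    induction t2 with
    | zero => intro t1 h1 _; omega
    | succ n ih =>
      intro t1 h1 h2'
      rcases Nat.lt_or_ge t1 n with hlt | hge
      · exact lt_trans (ih t1 hlt (by omega)) (hstep n (by omega))
      · have : t1 = n := by omega
        subst this
        exact hstep t1 (by omega)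
  -- collect D+1 distinct values
  set T := (Finset.range (D + 1)).image s with hT
  have hinj : Set.InjOn s ↑(Finset.range (D + 1)) := by
    intro t1 ht1 t2 ht2 heq
    have h1' : t1 < D + 1 := Finset.mem_range.mp (Finset.mem_coe.mp ht1)
    have h2' : t2 < D + 1 := Finset.mem_range.mp (Finset.mem_coe.mp ht2)
    by_contra hne
    rcases Nat.lt_or_ge t1 t2 with hlt | hge
    · exact absurd heq (ne_of_lt (hchain t2 t1 hlt (by omega)))
    · have hlt2 : t2 < t1 := by omega
      exact absurd heq.symm (ne_of_lt (hchain t1 t2 hlt2 (by omega)))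
  have hTcard : T.card = D + 1 := by
    rw [hT, Finset.card_image_of_injOn hinj, Finset.card_range]
  -- genSum is finite
  have hfin : (genSum r h A).Finite := by
    apply Set.Finite.subset (Set.finite_Icc ((h : ℤ) * A.min' hA) ((h : ℤ) * A.max' hA))
    rintro x ⟨c, hc1, hc2, hc3, hc4⟩
    rw [Set.mem_Icc]
    constructor
    · rw [← hc4, ← hc3]
      push_cast
      rw [Finset.sum_mul]
      refine Finset.sum_le_sum fun y hy => ?_
      exact mul_le_mul_of_nonneg_left (A.min'_le y hy) (Int.natCast_nonneg _)
    · rw [← hc4, ← hc3]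
      push_cast
      rw [Finset.sum_mul]
      refine Finset.sum_le_sum fun y hy => ?_
      exact mul_le_mul_of_nonneg_left (A.le_max' y hy) (Int.natCast_nonneg _)
  have hsub2 : ↑T ⊆ genSum r h A := by
    intro x hx
    obtain ⟨t, ht, rfl⟩ := Finset.mem_image.mp (Finset.mem_coe.mp hx)
    exact hmem t
  have hcard : D + 1 ≤ (genSum r h A).ncard := by
    calc D + 1 = T.card := hTcard.symm
      _ = (↑T : Set ℤ).ncard := (Set.ncard_coe_finset T).symm
      _ ≤ (genSum r h A).ncard := Set.ncard_le_ncard hsub2 hfin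
  -- compute D
  have hpuSum : ∑ u ∈ Finset.range h, GSAux.pu r u
      = r * (∑ i ∈ Finset.range m, i) + ε * m := by
    simp only [GSAux.pu]
    rw [hh]
    exact GSAux.sum_div hr m ε hε'
  have heuSum : ∑ u ∈ Finset.range h, GSAux.eu r h u
      = ∑ u ∈ Finset.range h, GSAux.pu r u := by
    simp only [GSAux.eu, GSAux.pu]
    exact Finset.sum_range_reflect (fun u => u / r) h
  have hDsum : D = ∑ u ∈ Finset.range h, GSAux.du r h k u := by
    rw [hD]
    unfold GSAux.tt
    rw [Finset.range_eq_Ico]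
  have key : D + (∑ u ∈ Finset.range h, GSAux.eu r h u)
      + (∑ u ∈ Finset.range h, GSAux.pu r u) + h = h * k := by
    rw [hDsum, ← Finset.sum_add_distrib, ← Finset.sum_add_distrib]
    have hpt : ∀ u ∈ Finset.range h,
        GSAux.du r h k u + GSAux.eu r h u + GSAux.pu r u = k - 1 := by
      intro u hu
      have := GSAux.pe (k := k) hr h2 (Finset.mem_range.mp hu)
      unfold GSAux.du
      omega
    rw [Finset.sum_congr rfl hpt, Finset.sum_const, Finset.card_range, smul_eq_mul]
    have : k - 1 + 1 = k := by omega
    calc h * (k - 1) + h = h * (k - 1 + 1) := by ring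
      _ = h * k := by rw [this]
  rw [heuSum, hpuSum] at key
  set Tn := ∑ i ∈ Finset.range m, i with hTn
  have hGauss : Tn * 2 = m * (m - 1) := Finset.sum_range_id_mul_two m
  have hTnm : 2 * Tn + m = m * m := by
    cases m with
    | zero => simp [hTn]
    | succ n =>
      have hx : (n + 1) * (n + 1) = (n + 1) * n + (n + 1) := by ring
      have hy : (n + 1) - 1 = n := by omega
      rw [hy] at hGauss
      linarith [hGauss, hx]
  -- final arithmetic
  have hcardZ : (D : ℤ) + 1 ≤ ((genSum r h A).ncard : ℤ) := by
    exact_mod_cast hcard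
  have keyZ : (D : ℤ) + 2 * ((r : ℤ) * Tn + (ε : ℤ) * m) + h = (h : ℤ) * k := by
    have := congrArg (Nat.cast : ℕ → ℤ) key
    push_cast at this
    linarith
  have hTnZ : 2 * (Tn : ℤ) + m = (m : ℤ) * m := by exact_mod_cast hTnm
  have hr2 : (r : ℤ) * (2 * Tn) + r * m = r * (m * m) := by
    rw [← hTnZ]; ring
  have hhZ : (h : ℤ) = (m : ℤ) * r + ε := by exact_mod_cast hh
  nlinarith [hcardZ, keyZ, hr2, hhZ]
end

section
/- Let A be a finite set of integers with |A| = k and r ≥ 1, with m + ε ≤ k where h = m·r + ε, 1 ≤ ε ≤ r−1. Then (r−1)·(m^∧A) + (m+ε)^∧A ⊆ h^(r)A. -/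
open Finset Pointwise

theorem stmt5 (A : Finset ℤ) (k h m r ε : ℕ)
    (hA : A.card = k) (hr : 1 ≤ r) (hh : h = m * r + ε)
    (hε1 : 1 ≤ ε) (hε2 : ε ≤ r - 1) (hmk : m + ε ≤ k) :
    iterSum (r - 1) (genSum 1 m A) + genSum 1 (m + ε) A ⊆ genSum r h A := by
  obtain ⟨r', rfl⟩ : ∃ r', r = r' + 1 := ⟨r - 1, by omega⟩
  simp only [Nat.add_sub_cancel] at *
  rintro x ⟨y, hy, z, hz, rfl⟩
  obtain ⟨f, hf, rfl⟩ := hy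
  choose c hc1 hc2 hc3 hc4 using hf
  obtain ⟨c', hc'1, hc'2, hc'3, hc'4⟩ := hz
  refine ⟨fun a => (∑ i, c i a) + c' a, ?_, ?_, ?_, ?_⟩
  · intro a
    have h1 : ∑ i : Fin r', c i a ≤ ∑ _i : Fin r', 1 :=
      Finset.sum_le_sum fun i _ => hc1 i a
    simp at h1
    have := hc'1 a
    show (∑ i, c i a) + c' a ≤ r' + 1
    omega
  · intro a ha
    replace ha : (∑ i, c i a) + c' a ≠ 0 := ha
    rcases Nat.eq_zero_or_pos (c' a) with h0 | hp
    · have hne : ∑ i, c i a ≠ 0 := by omega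
      obtain ⟨i, -, hi⟩ := Finset.exists_ne_zero_of_sum_ne_zero hne
      exact hc2 i a hi
    · exact hc'2 a (by omega)
  · rw [Finset.sum_add_distrib, hc'3, Finset.sum_comm]
    simp only [hc3, Finset.sum_const, Finset.card_univ, Fintype.card_fin, smul_eq_mul]
    subst hh; ring
  · simp only [add_smul, Finset.sum_add_distrib, Finset.sum_smul, hc'4]
    rw [Finset.sum_comm]
    simp only [hc4]
end

section
/- Let k ≥ 5 and let r, h be integers with h = m·r + ε, 0 ≤ ε ≤ r−1, and 2 ≤ r ≤ h ≤ r·k − 2. If A is a set of k integers with |h^(r)A| = h·k − m²·r + 1 − 2·m·ε − ε, then A is a k-term arithmetic progression. -/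
open Finset Pointwise

namespace Stmt7

variable {k r h : ℕ}

/-- a configuration is valid if each multiplicity is at most `r` and total is `h`. -/
def Valid (r h : ℕ) (c : Fin k → ℕ) : Prop := (∀ i, c i ≤ r) ∧ ∑ i, c i = h

/-- weighted sum of a configuration. -/
def wsum (w : Fin k → ℤ) (c : Fin k → ℕ) : ℤ := ∑ i, (c i : ℤ) * w i

/-- the potential weight. -/
def psiw (k : ℕ) : Fin k → ℤ := fun i => (k : ℤ) - 1 - (i : ℕ)

/-- natural-number potential, for induction. -/
def Psi (c : Fin k → ℕ) : ℕ := ∑ i, c i * (k - 1 - (i : ℕ))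

lemma psi_cast (c : Fin k → ℕ) : (Psi c : ℤ) = wsum (psiw k) c := by
  unfold Psi wsum psiw
  push_cast
  refine Finset.sum_congr rfl fun i _ => ?_
  have := i.isLt
  have : ((k - 1 - (i : ℕ) : ℕ) : ℤ) = (k : ℤ) - 1 - (i : ℕ) := by omega
  rw [this]

/-- move one unit of mass from `i1` to `i2`. -/
def move (c : Fin k → ℕ) (i1 i2 : Fin k) : Fin k → ℕ :=
  Function.update (Function.update c i1 (c i1 - 1)) i2 (c i2 + 1)

lemma move_le {c : Fin k → ℕ} {i1 i2 : Fin k} (hcr : ∀ i, c i ≤ r)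
    (h2 : c i2 + 1 ≤ r) : ∀ i, move c i1 i2 i ≤ r := by
  intro i
  unfold move
  rcases eq_or_ne i i2 with rfl | hi2
  · simp [Function.update_self]; omega
  · rw [Function.update_of_ne hi2]
    rcases eq_or_ne i i1 with rfl | hi1
    · rw [Function.update_self]; exact le_trans (Nat.sub_le _ _) (hcr _)
    · rw [Function.update_of_ne hi1]; exact hcr i

lemma sum_move {c : Fin k → ℕ} {i1 i2 : Fin k} (hne : i1 ≠ i2) (h1 : 1 ≤ c i1) :
    ∑ i, move c i1 i2 i = ∑ i, c i := by
  unfold move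
  rw [Finset.sum_update_of_mem (Finset.mem_univ i2)]
  rw [Finset.sum_update_of_mem (by simp [hne] : i1 ∈ (Finset.univ \ {i2}))]
  have h3 : ∑ i, c i = c i2 + (c i1 + ∑ i ∈ (Finset.univ \ {i2}) \ {i1}, c i) := by
    rw [← Finset.sum_eq_add_sum_sdiff_singleton_of_mem (by simp [hne] : i1 ∈ (Finset.univ \ {i2}))]
    rw [← Finset.sum_eq_add_sum_sdiff_singleton_of_mem (Finset.mem_univ i2)]
  omega

lemma sum_mul_update (f : Fin k → ℕ) (i0 : Fin k) (v : ℕ) (w : Fin k → ℤ) :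
    ∑ i, ((Function.update f i0 v) i : ℤ) * w i
      = (∑ i, (f i : ℤ) * w i) + ((v : ℤ) - f i0) * w i0 := by
  rw [Finset.sum_eq_add_sum_sdiff_singleton_of_mem (Finset.mem_univ i0)
    (fun i => ((Function.update f i0 v) i : ℤ) * w i)]
  rw [Finset.sum_eq_add_sum_sdiff_singleton_of_mem (Finset.mem_univ i0)
    (fun i => ((f i : ℤ) * w i))]
  have : ∑ i ∈ Finset.univ \ {i0}, ((Function.update f i0 v) i : ℤ) * w i
      = ∑ i ∈ Finset.univ \ {i0}, (f i : ℤ) * w i := by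
    refine Finset.sum_congr rfl fun i hi => ?_
    have : i ≠ i0 := by simpa using (Finset.mem_sdiff.1 hi).2
    rw [Function.update_of_ne this]
  rw [this, Function.update_self]
  ring

lemma wsum_move (w : Fin k → ℤ) {c : Fin k → ℕ} {i1 i2 : Fin k} (hne : i1 ≠ i2)
    (h1 : 1 ≤ c i1) :
    wsum w (move c i1 i2) = wsum w c + w i2 - w i1 := by
  unfold wsum move
  rw [sum_mul_update, Function.update_of_ne (Ne.symm hne), sum_mul_update]
  have hc1 : ((c i1 - 1 : ℕ) : ℤ) = (c i1 : ℤ) - 1 := by omega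
  rw [hc1]
  push_cast
  ring

/-- no upward move is available. -/
def NoUp (r : ℕ) (c : Fin k → ℕ) : Prop :=
  ∀ j (hj : j + 1 < k), c ⟨j, Nat.lt_of_succ_lt hj⟩ = 0 ∨ c ⟨j + 1, hj⟩ = r

/-- no downward move is available. -/
def NoDown (r : ℕ) (c : Fin k → ℕ) : Prop :=
  ∀ j (hj : j + 1 < k), c ⟨j + 1, hj⟩ = 0 ∨ c ⟨j, Nat.lt_of_succ_lt hj⟩ = r

/-- top-packed configuration. -/
def Etop (k r m ε : ℕ) : Fin k → ℕ := fun i =>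
  if (i : ℕ) + m + 1 = k then ε else if k < (i : ℕ) + m + 1 then r else 0

/-- bottom-packed configuration. -/
def Sbot (r m ε : ℕ) : Fin k → ℕ := fun i =>
  if (i : ℕ) < m then r else if (i : ℕ) = m then ε else 0

lemma Etop_rev (m ε : ℕ) (i : Fin k) : Etop k r m ε (Fin.rev i) = Sbot r m ε i := by
  have := i.isLt
  simp only [Etop, Sbot, Fin.val_rev]
  split_ifs <;> omega

/-- The main chain lemma: going upward. -/
lemma chainUp (b : Fin k → ℤ) (hb : StrictMono b) (G : Set ℤ)
    (hmem : ∀ c, Valid r h c → wsum b c ∈ G)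
    (ΨE : ℤ) (htop : ∀ c, Valid r h c → NoUp r c → wsum (psiw k) c = ΨE) :
    ∀ n (c : Fin k → ℕ), Psi c ≤ n → Valid r h c →
      ∃ S : Finset ℤ, ↑S ⊆ G ∧ (∀ x ∈ S, wsum b c ≤ x) ∧
        wsum (psiw k) c + 1 - ΨE ≤ (S.card : ℤ) := by
  intro n
  induction n with
  | zero =>
    intro c hPsi hv
    by_cases hno : NoUp r c
    · refine ⟨{wsum b c}, ?_, ?_, ?_⟩
      · intro x hx
        simp only [Finset.coe_singleton, Set.mem_singleton_iff] at hx
        exact hx ▸ hmem c hv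
      · intro x hx; simp only [Finset.mem_singleton] at hx; omega
      · rw [htop c hv hno]; simp
    · exfalso
      unfold NoUp at hno
      push_neg at hno
      obtain ⟨j, hj, hj0, hjr⟩ := hno
      have h0 : Psi c = 0 := Nat.le_zero.1 hPsi
      have h1 : ∀ i ∈ Finset.univ, c i * (k - 1 - (i : ℕ)) = 0 :=
        Finset.sum_eq_zero_iff.1 (by simpa [Psi] using h0)
      have h2 := h1 ⟨j, Nat.lt_of_succ_lt hj⟩ (Finset.mem_univ _)
      simp only [Fin.val_mk] at h2
      rcases Nat.mul_eq_zero.1 h2 with hz | hz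
      · exact hj0 hz
      · omega
  | succ n ih =>
    intro c hPsi hv
    by_cases hno : NoUp r c
    · refine ⟨{wsum b c}, ?_, ?_, ?_⟩
      · intro x hx
        simp only [Finset.coe_singleton, Set.mem_singleton_iff] at hx
        exact hx ▸ hmem c hv
      · intro x hx; simp only [Finset.mem_singleton] at hx; omega
      · rw [htop c hv hno]; simp
    · unfold NoUp at hno
      push_neg at hno
      obtain ⟨j, hj, hj0, hjr⟩ := hno
      set i1 : Fin k := ⟨j, Nat.lt_of_succ_lt hj⟩ with hi1
      set i2 : Fin k := ⟨j + 1, hj⟩ with hi2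
      have hne : i1 ≠ i2 := by simp [hi1, hi2, Fin.ext_iff]
      have hge : 1 ≤ c i1 := Nat.one_le_iff_ne_zero.2 hj0
      have hlt : c i2 + 1 ≤ r := by
        have := hv.1 i2; omega
      set c' := move c i1 i2 with hc'
      have hv' : Valid r h c' := ⟨move_le hv.1 hlt, by rw [hc', sum_move hne hge, hv.2]⟩
      have hpsi' : wsum (psiw k) c' = wsum (psiw k) c - 1 := by
        rw [hc', wsum_move _ hne hge]
        have : psiw k i2 = psiw k i1 - 1 := by
          simp only [psiw, hi1, hi2]
          push_cast
          ring
        rw [this]; ring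
      have hPsin : Psi c' ≤ n := by
        have h1 : (Psi c' : ℤ) = (Psi c : ℤ) - 1 := by
          rw [psi_cast, psi_cast, hpsi']
        omega
      obtain ⟨S', hS'G, hS'ge, hS'card⟩ := ih c' hPsin hv'
      have hval : wsum b c < wsum b c' := by
        rw [hc', wsum_move _ hne hge]
        have : b i1 < b i2 := hb (by simp [hi1, hi2, Fin.lt_def])
        omega
      have hnotmem : wsum b c ∉ S' := fun hmem' => absurd (hS'ge _ hmem') (by omega)
      refine ⟨insert (wsum b c) S', ?_, ?_, ?_⟩
      · intro x hx
        simp only [Finset.coe_insert, Set.mem_insert_iff] at hx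
        rcases hx with rfl | hx
        · exact hmem c hv
        · exact hS'G hx
      · intro x hx
        rcases Finset.mem_insert.1 hx with rfl | hx
        · exact le_rfl
        · exact le_trans (le_of_lt hval) (hS'ge x hx)
      · rw [Finset.card_insert_of_notMem hnotmem]
        push_cast
        omega

lemma noUp_eq_top (m ε : ℕ) (hh : h = m * r + ε) (hε : ε < r) (hm : m < k)
    (hr : 1 ≤ r) (hpos : 1 ≤ h)
    (c : Fin k → ℕ) (hv : Valid r h c) (hno : NoUp r c) : c = Etop k r m ε := by
  have hk : 0 < k := lt_of_le_of_lt (Nat.zero_le m) hm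
  have claim : ∀ d j (hjk : j < k), 1 ≤ c ⟨j, hjk⟩ →
      ∀ (hd : j + 1 + d < k), c ⟨j + 1 + d, hd⟩ = r := by
    intro d
    induction d with
    | zero =>
      intro j hjk h1 hd
      rcases hno j hd with h0 | hr' <;> [omega; exact hr']
    | succ d ihd =>
      intro j hjk h1 hd
      have hprev : c ⟨j + 1 + d, by omega⟩ = r := ihd j hjk h1 (by omega)
      rcases hno (j + 1 + d) (by omega) with h0 | hr'
      · omega
      · exact hr'
  obtain ⟨i0, hi0⟩ : ∃ i : Fin k, 1 ≤ c i := by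
    by_contra hno1; push_neg at hno1
    have hz : ∑ i, c i = 0 := Finset.sum_eq_zero (fun i _ => by have := hno1 i; omega)
    rw [hv.2] at hz; omega
  obtain ⟨p, hpmem, hpmin⟩ := Finset.exists_min_image
    (Finset.univ.filter fun i => 1 ≤ c i) id ⟨i0, by simp [hi0]⟩
  have hcp : 1 ≤ c p := by simpa using hpmem
  have hbelow : ∀ i : Fin k, i < p → c i = 0 := by
    intro i hip
    by_contra hne
    have : 1 ≤ c i := Nat.one_le_iff_ne_zero.2 hne
    have := hpmin i (by simp [this])
    simp only [id] at this
    exact absurd hip (not_lt.2 this)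
  have habove : ∀ i : Fin k, p < i → c i = r := by
    intro i hpi
    have hplt : (p : ℕ) < (i : ℕ) := hpi
    have h2 := claim ((i : ℕ) - (p : ℕ) - 1) (p : ℕ) p.isLt
      (by simpa using hcp) (by omega)
    have hieq : i = ⟨(p : ℕ) + 1 + ((i : ℕ) - (p : ℕ) - 1), by omega⟩ :=
      Fin.ext (by simp; omega)
    rw [hieq]; exact h2
  set q : ℕ := k - 1 - (p : ℕ) with hq
  have hsum : c p + r * q = h := by
    have hsplit : ∑ i, c i = c p + ∑ i ∈ Finset.univ \ {p}, c i :=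
      Finset.sum_eq_add_sum_sdiff_singleton_of_mem (Finset.mem_univ p) c
    have hcongr : ∀ i ∈ Finset.univ \ {p}, c i = if p < i then r else 0 := by
      intro i hi
      have hip : i ≠ p := by simpa using (Finset.mem_sdiff.1 hi).2
      rcases lt_trichotomy i p with hlt | heq | hgt
      · rw [hbelow i hlt, if_neg (not_lt.2 hlt.le)]
      · exact absurd heq hip
      · rw [habove i hgt, if_pos hgt]
    have hfilter : (Finset.univ \ {p}).filter (fun i => p < i) = Finset.Ioi p := by
      ext i
      simp only [Finset.mem_filter, Finset.mem_sdiff, Finset.mem_univ, Finset.mem_singleton,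
        Finset.mem_Ioi, true_and]
      constructor
      · rintro ⟨-, h2⟩; exact h2
      · intro h2; exact ⟨ne_of_gt h2, h2⟩
    have hrest : ∑ i ∈ Finset.univ \ {p}, c i = r * q := by
      rw [Finset.sum_congr rfl hcongr, Finset.sum_ite, Finset.sum_const, Finset.sum_const_zero,
        add_zero, smul_eq_mul, hfilter, Fin.card_Ioi]
      rw [Nat.mul_comm]
    rw [hrest] at hsplit
    rw [hv.2] at hsplit
    omega
  have hcpr : c p ≤ r := hv.1 p
  rw [hh] at hsum
  have hq_le : q ≤ m := by
    by_contra hqgt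
    push_neg at hqgt
    have hmul : r * (m + 1) ≤ r * q := Nat.mul_le_mul_left r hqgt
    nlinarith [hsum, hcp, hε, hmul]
  have hq_ge : m ≤ q + 1 := by
    by_contra hqlt
    push_neg at hqlt
    have hmul : (q + 2) * r ≤ m * r := Nat.mul_le_mul_right r hqlt
    nlinarith [hsum, hcpr, hε, hmul]
  have hpk : (p : ℕ) + 1 + q = k := by
    have := p.isLt; omega
  rcases Nat.eq_or_lt_of_le hq_le with hqm | hqlt
  · -- q = m, c p = ε
    have hrw : m * r = r * q := by rw [hqm]; ring
    have hcpε : c p = ε := by linarith [hsum, hrw]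
    funext i
    rcases lt_trichotomy i p with hlt | heq | hgt
    · rw [hbelow i hlt]
      have hival : (i : ℕ) < (p : ℕ) := hlt
      simp only [Etop]
      split_ifs with h1 h2 <;> omega
    · subst heq
      rw [hcpε]
      simp only [Etop]
      split_ifs with h1 h2 <;> omega
    · rw [habove i hgt]
      have hival : (p : ℕ) < (i : ℕ) := hgt
      simp only [Etop]
      split_ifs with h1 h2 <;> omega
  · -- q = m - 1, c p = r, ε = 0
    have hqm : q + 1 = m := by omega
    have hrw : m * r = r * q + r := by rw [← hqm]; ring
    have hcpr' : c p = r + ε := by linarith [hsum, hrw]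
    have hε0 : ε = 0 := by omega
    have hcpR : c p = r := by omega
    funext i
    rcases lt_trichotomy i p with hlt | heq | hgt
    · rw [hbelow i hlt]
      have hival : (i : ℕ) < (p : ℕ) := hlt
      simp only [Etop]
      split_ifs with h1 h2 <;> omega
    · subst heq
      rw [hcpR]
      simp only [Etop]
      split_ifs with h1 h2 <;> omega
    · rw [habove i hgt]
      have hival : (p : ℕ) < (i : ℕ) := hgt
      simp only [Etop]
      split_ifs with h1 h2 <;> omega

lemma sum_rev (c : Fin k → ℕ) : ∑ i, c (Fin.rev i) = ∑ i, c i :=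
  Fintype.sum_bijective Fin.rev Fin.rev_bijective _ _ (fun _ => rfl)

lemma wsum_rev (w : Fin k → ℤ) (c : Fin k → ℕ) :
    wsum w (fun i => c (Fin.rev i)) = ∑ i, (c i : ℤ) * w (Fin.rev i) :=
  Fintype.sum_bijective Fin.rev Fin.rev_bijective _ _ (fun i => by
    simp only [Fin.rev_rev])

lemma psiw_rev (i : Fin k) : psiw k (Fin.rev i) = ((i : ℕ) : ℤ) := by
  have := i.isLt
  simp only [psiw, Fin.val_rev]
  omega

lemma valid_rev {c : Fin k → ℕ} (hv : Valid r h c) :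
    Valid r h (fun i => c (Fin.rev i)) :=
  ⟨fun i => hv.1 _, by rw [sum_rev]; exact hv.2⟩

lemma noDown_eq_bot (m ε : ℕ) (hh : h = m * r + ε) (hε : ε < r) (hm : m < k)
    (hr : 1 ≤ r) (hpos : 1 ≤ h)
    (c : Fin k → ℕ) (hv : Valid r h c) (hno : NoDown r c) : c = Sbot r m ε := by
  have hk : 0 < k := lt_of_le_of_lt (Nat.zero_le m) hm
  have hnor : NoUp r (fun i => c (Fin.rev i)) := by
    intro j hj
    have hj' : (k - 2 - j) + 1 < k := by omega
    rcases hno (k - 2 - j) hj' with h0 | hr'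
    · left
      have heq : Fin.rev ⟨j, Nat.lt_of_succ_lt hj⟩ = ⟨k - 2 - j + 1, hj'⟩ :=
        Fin.ext (by simp only [Fin.val_rev]; omega)
      show c (Fin.rev ⟨j, Nat.lt_of_succ_lt hj⟩) = 0
      rw [heq]; exact h0
    · right
      have heq : Fin.rev ⟨j + 1, hj⟩ = ⟨k - 2 - j, Nat.lt_of_succ_lt hj'⟩ :=
        Fin.ext (by simp only [Fin.val_rev]; omega)
      show c (Fin.rev ⟨j + 1, hj⟩) = r
      rw [heq]; exact hr'
  have htop := noUp_eq_top m ε hh hε hm hr hpos _ (valid_rev hv) hnor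
  funext i
  have h2 := congrFun htop (Fin.rev i)
  simp only [Fin.rev_rev] at h2
  rw [h2, Etop_rev]

lemma psiw_add_rev (c : Fin k → ℕ) (hsum : ∑ i, c i = h) :
    wsum (psiw k) c + wsum (psiw k) (fun i => c (Fin.rev i)) = (h : ℤ) * ((k : ℤ) - 1) := by
  rw [wsum_rev]
  unfold wsum
  rw [← Finset.sum_add_distrib]
  have hterm : ∀ i : Fin k, (c i : ℤ) * psiw k i + (c i : ℤ) * psiw k (Fin.rev i)
      = (c i : ℤ) * ((k : ℤ) - 1) := by
    intro i
    rw [psiw_rev]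
    simp only [psiw]
    ring
  rw [Finset.sum_congr rfl (fun i _ => hterm i), ← Finset.sum_mul]
  have : (∑ i, (c i : ℤ)) = (h : ℤ) := by
    rw [← Nat.cast_sum, hsum]
  rw [this]

lemma chainDown (b : Fin k → ℤ) (hb : StrictMono b) (G : Set ℤ)
    (hmem : ∀ c, Valid r h c → wsum b c ∈ G)
    (ΨS : ℤ) (hbot : ∀ c, Valid r h c → NoDown r c → wsum (psiw k) c = ΨS) :
    ∀ (c : Fin k → ℕ), Valid r h c →
      ∃ S : Finset ℤ, ↑S ⊆ G ∧ (∀ x ∈ S, x ≤ wsum b c) ∧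
        ΨS + 1 - wsum (psiw k) c ≤ (S.card : ℤ) := by
  intro c hv
  set b' : Fin k → ℤ := fun i => -(b (Fin.rev i)) with hb'
  have hb'mono : StrictMono b' := by
    intro i j hij
    simp only [hb', neg_lt_neg_iff]
    refine hb ?_
    rw [Fin.lt_def] at hij ⊢
    simp only [Fin.val_rev]
    omega
  set G' : Set ℤ := {x | -x ∈ G} with hG'
  have key1 : ∀ c' : Fin k → ℕ, wsum b' c' = -(wsum b (fun i => c' (Fin.rev i))) := by
    intro c'
    rw [wsum_rev]
    unfold wsum
    simp only [hb', mul_neg]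
    rw [← Finset.sum_neg_distrib]
  have hmem' : ∀ c', Valid r h c' → wsum b' c' ∈ G' := by
    intro c' hv'
    rw [key1]
    simp only [hG', Set.mem_setOf_eq, neg_neg]
    exact hmem _ (valid_rev hv')
  have htop' : ∀ c', Valid r h c' → NoUp r c' →
      wsum (psiw k) c' = (h : ℤ) * ((k : ℤ) - 1) - ΨS := by
    intro c' hv' hno'
    have hnod : NoDown r (fun i => c' (Fin.rev i)) := by
      intro j hj
      have hj' : (k - 2 - j) + 1 < k := by omega
      rcases hno' (k - 2 - j) hj' with h0 | hr'
      · left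
        have heq : Fin.rev ⟨j + 1, hj⟩ = ⟨k - 2 - j, Nat.lt_of_succ_lt hj'⟩ :=
          Fin.ext (by simp only [Fin.val_rev]; omega)
        show c' (Fin.rev ⟨j + 1, hj⟩) = 0
        rw [heq]; exact h0
      · right
        have heq : Fin.rev ⟨j, Nat.lt_of_succ_lt hj⟩ = ⟨k - 2 - j + 1, hj'⟩ :=
          Fin.ext (by simp only [Fin.val_rev]; omega)
        show c' (Fin.rev ⟨j, Nat.lt_of_succ_lt hj⟩) = r
        rw [heq]; exact hr'
    have hΨ := hbot _ (valid_rev hv') hnod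
    have h2 := psiw_add_rev (c := c') hv'.2
    linarith
  obtain ⟨S', h1, h2, h3⟩ := chainUp b' hb'mono G' hmem' _ htop'
    (Psi (fun i => c (Fin.rev i))) (fun i => c (Fin.rev i)) le_rfl (valid_rev hv)
  refine ⟨S'.image (fun x => -x), ?_, ?_, ?_⟩
  · intro x hx
    simp only [Finset.coe_image, Set.mem_image, Finset.mem_coe] at hx
    obtain ⟨y, hy, rfl⟩ := hx
    exact h1 hy
  · intro x hx
    obtain ⟨y, hy, rfl⟩ := Finset.mem_image.1 hx
    have hy2 := h2 y hy
    rw [key1] at hy2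
    have hcc : (fun i => c (Fin.rev (Fin.rev i))) = c := funext fun i => by rw [Fin.rev_rev]
    simp only [hcc] at hy2
    linarith
  · rw [Finset.card_image_of_injective _ neg_injective]
    have h4 := psiw_add_rev (c := c) hv.2
    linarith

lemma psi_diff (m ε : ℕ) (hmk : m < k) :
    wsum (psiw k) (Sbot r m ε : Fin k → ℕ) - wsum (psiw k) (Etop k r m ε : Fin k → ℕ)
      = (m : ℤ) * r * ((k : ℤ) - m) + (ε : ℤ) * ((k : ℤ) - 2 * m - 1) := by
  have hE : wsum (psiw k) (Etop k r m ε : Fin k → ℕ)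
      = ∑ i, ((Sbot r m ε : Fin k → ℕ) i : ℤ) * ((i : ℕ) : ℤ) := by
    unfold wsum
    have hrev : ∑ i, ((Etop k r m ε : Fin k → ℕ) (Fin.rev i) : ℤ) * psiw k (Fin.rev i)
        = ∑ i, ((Etop k r m ε : Fin k → ℕ) i : ℤ) * psiw k i :=
      Fintype.sum_bijective Fin.rev Fin.rev_bijective _ _ (fun _ => rfl)
    rw [← hrev]
    refine Finset.sum_congr rfl fun i _ => ?_
    rw [Etop_rev, psiw_rev]
  have hdiff : wsum (psiw k) (Sbot r m ε : Fin k → ℕ)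
        - wsum (psiw k) (Etop k r m ε : Fin k → ℕ)
      = ∑ i : Fin k, ((Sbot r m ε : Fin k → ℕ) i : ℤ) * ((k : ℤ) - 1 - 2 * ((i : ℕ) : ℤ)) := by
    rw [hE]
    unfold wsum
    rw [← Finset.sum_sub_distrib]
    refine Finset.sum_congr rfl fun i _ => ?_
    simp only [psiw]
    ring
  rw [hdiff]
  have htrans : ∑ i : Fin k, ((Sbot r m ε : Fin k → ℕ) i : ℤ) * ((k : ℤ) - 1 - 2 * ((i : ℕ) : ℤ))
      = ∑ j ∈ Finset.range k,
          (if j < m then (r : ℤ) else if j = m then (ε : ℤ) else 0) * ((k : ℤ) - 1 - 2 * (j : ℤ)) := by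
    rw [← Fin.sum_univ_eq_sum_range
      (fun j => (if j < m then (r : ℤ) else if j = m then (ε : ℤ) else 0) * ((k : ℤ) - 1 - 2 * (j : ℤ))) k]
    refine Finset.sum_congr rfl fun i _ => ?_
    simp only [Sbot]
    split_ifs <;> push_cast <;> ring
  rw [htrans]
  have hsub : ∑ j ∈ Finset.range k,
        (if j < m then (r : ℤ) else if j = m then (ε : ℤ) else 0) * ((k : ℤ) - 1 - 2 * (j : ℤ))
      = ∑ j ∈ Finset.range (m + 1),
        (if j < m then (r : ℤ) else if j = m then (ε : ℤ) else 0) * ((k : ℤ) - 1 - 2 * (j : ℤ)) := by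
    refine (Finset.sum_subset (Finset.range_subset_range.2 (by omega)) fun j hj hj2 => ?_).symm
    simp only [Finset.mem_range] at hj hj2
    rw [if_neg (by omega), if_neg (by omega), zero_mul]
  rw [hsub, Finset.sum_range_succ, if_neg (by omega), if_pos rfl]
  have hmain : ∑ j ∈ Finset.range m,
        (if j < m then (r : ℤ) else if j = m then (ε : ℤ) else 0) * ((k : ℤ) - 1 - 2 * (j : ℤ))
      = (r : ℤ) * ∑ j ∈ Finset.range m, ((k : ℤ) - 1 - 2 * (j : ℤ)) := by
    rw [Finset.mul_sum]
    refine Finset.sum_congr rfl fun j hj => ?_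
    rw [if_pos (Finset.mem_range.1 hj)]
  rw [hmain]
  have hsplit : ∑ j ∈ Finset.range m, ((k : ℤ) - 1 - 2 * (j : ℤ))
      = (m : ℤ) * ((k : ℤ) - 1) - 2 * (∑ j ∈ Finset.range m, (j : ℤ)) := by
    rw [Finset.sum_sub_distrib, Finset.sum_const, Finset.card_range, ← Finset.mul_sum,
      nsmul_eq_mul]
  rw [hsplit]
  have hG : (∑ j ∈ Finset.range m, (j : ℤ)) * 2 = (m : ℤ) * ((m : ℤ) - 1) := by
    rcases Nat.eq_zero_or_pos m with rfl | hm0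
    · simp
    · have hm0' : 1 ≤ m := hm0
      have h0 := Finset.sum_range_id_mul_two m
      zify [hm0'] at h0
      exact_mod_cast h0
  linear_combination (-(r : ℤ)) * hG

lemma fill (caps : Fin k → ℕ) (t : ℕ) (ht : t ≤ ∑ i, caps i) :
    ∃ w : Fin k → ℕ, (∀ i, w i ≤ caps i) ∧ ∑ i, w i = t := by
  induction t with
  | zero => exact ⟨fun _ => 0, fun i => Nat.zero_le _, by simp⟩
  | succ t ih =>
    obtain ⟨w, hw1, hw2⟩ := ih (by omega)
    obtain ⟨i0, hi0⟩ : ∃ i, w i < caps i := by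
      by_contra hcon
      push_neg at hcon
      have : ∑ i, caps i ≤ ∑ i, w i := Finset.sum_le_sum fun i _ => hcon i
      omega
    refine ⟨Function.update w i0 (w i0 + 1), ?_, ?_⟩
    · intro i
      rcases eq_or_ne i i0 with rfl | hne
      · rw [Function.update_self]; omega
      · rw [Function.update_of_ne hne]; exact hw1 i
    · rw [Finset.sum_update_of_mem (Finset.mem_univ i0)]
      have := Finset.sum_eq_add_sum_sdiff_singleton_of_mem (Finset.mem_univ i0) w
      omega

end Stmt7

set_option maxHeartbeats 2000000 in
theorem stmt7 (A : Finset ℤ) (k h m r ε : ℕ)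
    (hk5 : 5 ≤ k) (hA : A.card = k)
    (hh : h = m * r + ε) (hε : ε ≤ r - 1)
    (hr : 2 ≤ r) (hrh : r ≤ h) (h2 : h ≤ r * k - 2)
    (heq : ((genSum r h A).ncard : ℤ) =
      (h : ℤ) * k - (m : ℤ) ^ 2 * r + 1 - 2 * m * ε - ε) :
    ∃ a d : ℤ, 0 < d ∧ A = (Finset.range k).image fun i : ℕ => a + d * (i : ℤ) := by
  classical
  open Stmt7 in
  -- basic numeric facts
  have hk0 : 0 < k := by omega
  have hεr : ε < r := by omega
  have hpos : 1 ≤ h := by omega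
  have h5 : 2 ≤ r * k := le_trans hr (Nat.le_mul_of_pos_right r (by omega))
  have hh2 : h + 2 ≤ r * k := by
    have hc := Nat.sub_add_cancel h5
    calc h + 2 ≤ (r * k - 2) + 2 := Nat.add_le_add_right h2 2
    _ = r * k := hc
  have hmr : m * r ≤ h := hh ▸ Nat.le_add_right _ _
  have hm : m < k := by
    have h6 : m * r < k * r := by
      rw [mul_comm k r]
      omega
    exact Nat.lt_of_mul_lt_mul_right h6
  -- the ordered enumeration of A
  set b : Fin k → ℤ := fun i => ((A.orderIsoOfFin hA i : ℤ)) with hbdef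
  have hb : StrictMono b := fun i j hij =>
    Subtype.coe_lt_coe.2 ((A.orderIsoOfFin hA).strictMono hij)
  -- transfer of sums over A to sums over Fin k
  have sumA : ∀ {M : Type} [AddCommMonoid M] (F : ℤ → M), ∑ a ∈ A, F a = ∑ i, F (b i) := by
    intro M _ F
    have hcomp := Equiv.sum_comp (A.orderIsoOfFin hA).toEquiv (fun s => F (s : ℤ))
    calc ∑ a ∈ A, F a = ∑ x ∈ A.attach, F ↑x := (Finset.sum_attach A _).symm
    _ = ∑ i, F (b i) := by
        rw [← Finset.univ_eq_attach, ← hcomp]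
        rfl
  -- membership of configuration values in the generalized sumset
  set G : Set ℤ := genSum r h A with hGdef
  have memG : ∀ c : Fin k → ℕ, Valid r h c → wsum b c ∈ G := by
    rintro c ⟨hcr, hch⟩
    classical
    set C : ℤ → ℕ := fun x => if hx : x ∈ A then c ((A.orderIsoOfFin hA).symm ⟨x, hx⟩) else 0
      with hCdef
    have hCb : ∀ i : Fin k, C (b i) = c i := by
      intro i
      have hbi : b i ∈ A := (A.orderIsoOfFin hA i).2
      simp only [hCdef]
      rw [dif_pos hbi]
      congr 1
      have h9 : (⟨b i, hbi⟩ : {x // x ∈ A}) = A.orderIsoOfFin hA i := Subtype.ext rfl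
      rw [h9, OrderIso.symm_apply_apply]
    refine ⟨C, ?_, ?_, ?_, ?_⟩
    · intro a
      simp only [hCdef]
      by_cases hx : a ∈ A
      · rw [dif_pos hx]; exact hcr _
      · rw [dif_neg hx]; exact Nat.zero_le _
    · intro a ha
      by_contra hmem
      simp only [hCdef] at ha
      rw [dif_neg hmem] at ha
      exact ha rfl
    · rw [sumA (F := C), ← hch]
      exact Finset.sum_congr rfl fun i _ => hCb i
    · rw [sumA (F := fun a => C a • a)]
      unfold Stmt7.wsum
      refine Finset.sum_congr rfl fun i _ => ?_
      rw [hCb i]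
      exact (nsmul_eq_mul _ _).symm
  -- finiteness of the generalized sumset
  have hfin : G.Finite := by
    apply Set.Finite.subset (Finset.finite_toSet
      ((Finset.univ : Finset (Fin k → Fin (r + 1))).image
        (fun d => ∑ i, ((d i : ℕ) : ℤ) * b i)))
    rintro x ⟨c, hc1, hc2, hc3, hc4⟩
    refine Finset.mem_coe.2 (Finset.mem_image.2
      ⟨fun i => ⟨c (b i), Nat.lt_succ_of_le (hc1 (b i))⟩, Finset.mem_univ _, ?_⟩)
    beta_reduce
    rw [← hc4, sumA (F := fun a => c a • a)]
    refine Finset.sum_congr rfl fun i _ => ?_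
    exact (nsmul_eq_mul _ _).symm
  -- case split: adjacent gaps all equal, or some adjacent pair differs
  by_cases hgap : ∀ j, ∀ (hj : j + 2 < k),
      b ⟨j + 1, Nat.lt_of_succ_lt hj⟩ - b ⟨j, Nat.lt_of_succ_lt (Nat.lt_of_succ_lt hj)⟩ =
        b ⟨j + 2, hj⟩ - b ⟨j + 1, Nat.lt_of_succ_lt hj⟩
  · -- arithmetic progression case
    have hd : ∀ j, ∀ (hj : j + 1 < k),
        b ⟨j + 1, hj⟩ - b ⟨j, Nat.lt_of_succ_lt hj⟩ =
          b ⟨1, by omega⟩ - b ⟨0, by omega⟩ := by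
      intro j
      induction j with
      | zero => intro hj; rfl
      | succ n ihn =>
        intro hj
        rw [← hgap n hj]
        exact ihn (Nat.lt_of_succ_lt hj)
    set a0 : ℤ := b ⟨0, by omega⟩ with ha0
    set d0 : ℤ := b ⟨1, by omega⟩ - b ⟨0, by omega⟩ with hd0def
    have hd0 : 0 < d0 := sub_pos.2 (hb (show (⟨0, by omega⟩ : Fin k) < ⟨1, by omega⟩ by
      simp [Fin.lt_def]))
    have hlin : ∀ n, ∀ (hn : n < k), b ⟨n, hn⟩ = a0 + d0 * (n : ℤ) := by
      intro n
      induction n with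
      | zero => intro hn; simp [ha0]
      | succ n ihn =>
        intro hn
        have h1 := hd n hn
        have h2 := ihn (Nat.lt_of_succ_lt hn)
        push_cast
        push_cast at h2
        linarith
    refine ⟨a0, d0, hd0, ?_⟩
    have hAim : Finset.image b Finset.univ = A := by
      refine Finset.eq_of_subset_of_card_le (fun x hx => ?_) ?_
      · obtain ⟨i, -, rfl⟩ := Finset.mem_image.1 hx
        exact (A.orderIsoOfFin hA i).2
      · rw [hA, Finset.card_image_of_injective _ hb.injective, Finset.card_univ,
          Fintype.card_fin]
    rw [← hAim]
    ext x
    simp only [Finset.mem_image, Finset.mem_univ, true_and, Finset.mem_range]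
    constructor
    · rintro ⟨i, rfl⟩
      exact ⟨i.val, i.isLt, (hlin i.val i.isLt).symm⟩
    · rintro ⟨n, hn, rfl⟩
      exact ⟨⟨n, hn⟩, hlin n hn⟩
  · -- extra element case: contradiction with the cardinality hypothesis
    exfalso
    push_neg at hgap
    obtain ⟨j, hj, hne⟩ := hgap
    set J : Fin k := ⟨j, by omega⟩ with hJdef
    set J1 : Fin k := ⟨j + 1, by omega⟩ with hJ1def
    set J2 : Fin k := ⟨j + 2, hj⟩ with hJ2def
    have hJJ1 : J ≠ J1 := by simp [hJdef, hJ1def, Fin.ext_iff]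
    have hJJ2 : J ≠ J2 := by simp [hJdef, hJ2def, Fin.ext_iff]
    have hJ1J2 : J1 ≠ J2 := by simp [hJ1def, hJ2def, Fin.ext_iff]
    -- the caps
    set caps : Fin k → ℕ := fun i =>
      if i = J then r - 1 else if i = J1 then r - 2 else if i = J2 then r - 1 else r
      with hcapsdef
    set dd : Fin k → ℕ := fun i =>
      (if i = J then 1 else 0) + (if i = J1 then 2 else 0) + (if i = J2 then 1 else 0)
      with hdddef
    have hcapdd : ∀ i, caps i + dd i = r := by
      intro i
      simp only [hcapsdef, hdddef]
      by_cases h1 : i = J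
      · subst h1
        rw [if_pos rfl, if_pos rfl, if_neg hJJ1, if_neg hJJ2]
        omega
      · by_cases h2 : i = J1
        · subst h2
          rw [if_neg h1, if_neg h1, if_pos rfl, if_pos rfl, if_neg hJ1J2]
          omega
        · by_cases h3 : i = J2
          · subst h3
            rw [if_neg h1, if_neg h1, if_neg h2, if_neg h2, if_pos rfl, if_pos rfl]
            omega
          · rw [if_neg h1, if_neg h1, if_neg h2, if_neg h2, if_neg h3, if_neg h3]
            omega
    have hddsum : ∑ i, dd i = 4 := by
      simp only [hdddef]
      rw [Finset.sum_add_distrib, Finset.sum_add_distrib]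
      rw [Finset.sum_ite_eq' Finset.univ J (fun _ => 1),
        Finset.sum_ite_eq' Finset.univ J1 (fun _ => 2),
        Finset.sum_ite_eq' Finset.univ J2 (fun _ => 1)]
      simp
    have hcapsum : ∑ i, caps i + 4 = k * r := by
      have : ∑ i, (caps i + dd i) = ∑ i, caps i + ∑ i, dd i := Finset.sum_add_distrib
      rw [hddsum] at this
      rw [← this]
      rw [Finset.sum_congr rfl (fun i _ => hcapdd i)]
      simp [Finset.sum_const, Finset.card_univ, mul_comm]
    have hfillable : h - 2 ≤ ∑ i, caps i := by
      have h6 : h + 2 ≤ k * r := by rw [mul_comm]; exact hh2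
      omega
    obtain ⟨w, hw1, hw2⟩ := Stmt7.fill caps (h - 2) hfillable
    set cstar : Fin k → ℕ := fun i =>
      w i + (if i = J then 1 else 0) + (if i = J1 then 1 else 0) with hcstardef
    have hcstar_at : ∀ i, cstar i = w i + (if i = J then 1 else 0) + (if i = J1 then 1 else 0) :=
      fun i => rfl
    have hwJv : w J ≤ r - 1 := by
      have h9 := hw1 J
      simp only [hcapsdef, if_pos rfl] at h9
      exact h9
    have hwJ1v : w J1 ≤ r - 2 := by
      have h9 := hw1 J1
      simp only [hcapsdef, if_neg (Ne.symm hJJ1), if_pos rfl] at h9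
      exact h9
    have hwJ2v : w J2 ≤ r - 1 := by
      have h9 := hw1 J2
      simp only [hcapsdef, if_neg (Ne.symm hJJ2), if_neg (Ne.symm hJ1J2), if_pos rfl] at h9
      exact h9
    have hcsJ : 1 ≤ cstar J := by
      rw [hcstar_at, if_pos rfl, if_neg hJJ1]
      omega
    have hcsJ1 : 1 ≤ cstar J1 := by
      rw [hcstar_at, if_neg (Ne.symm hJJ1), if_pos rfl]
      omega
    have hcsJ1r : cstar J1 + 1 ≤ r := by
      rw [hcstar_at, if_neg (Ne.symm hJJ1), if_pos rfl]
      omega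
    have hcsJ2r : cstar J2 + 1 ≤ r := by
      rw [hcstar_at, if_neg (Ne.symm hJJ2), if_neg (Ne.symm hJ1J2)]
      omega
    have hcsv : Valid r h cstar := by
      constructor
      · intro i
        by_cases h1 : i = J
        · subst h1
          rw [hcstar_at, if_pos rfl, if_neg hJJ1]
          omega
        · by_cases h2 : i = J1
          · subst h2
            rw [hcstar_at, if_neg h1, if_pos rfl]
            omega
          · rw [hcstar_at, if_neg h1, if_neg h2]
            have h9 := hw1 i
            have h10 : caps i ≤ r := by
              simp only [hcapsdef]
              split_ifs <;> omega
            omega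
      · simp only [hcstardef]
        rw [Finset.sum_add_distrib, Finset.sum_add_distrib,
          Finset.sum_ite_eq' Finset.univ J (fun _ => 1),
          Finset.sum_ite_eq' Finset.univ J1 (fun _ => 1)]
        simp only [Finset.mem_univ, if_pos]
        omega
    -- the two one-step moves
    have hbJ : b J < b J1 := hb (by simp [hJdef, hJ1def, Fin.lt_def])
    have hbJ1 : b J1 < b J2 := hb (by simp [hJ1def, hJ2def, Fin.lt_def])
    set up1 := Stmt7.move cstar J J1 with hup1def
    set up2 := Stmt7.move cstar J1 J2 with hup2def
    have hup1v : Valid r h up1 :=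
      ⟨Stmt7.move_le hcsv.1 hcsJ1r, by rw [hup1def, Stmt7.sum_move hJJ1 hcsJ]; exact hcsv.2⟩
    have hup2v : Valid r h up2 :=
      ⟨Stmt7.move_le hcsv.1 hcsJ2r, by rw [hup2def, Stmt7.sum_move hJ1J2 hcsJ1]; exact hcsv.2⟩
    have hup1val : wsum b up1 = wsum b cstar + b J1 - b J :=
      Stmt7.wsum_move b hJJ1 hcsJ
    have hup2val : wsum b up2 = wsum b cstar + b J2 - b J1 :=
      Stmt7.wsum_move b hJ1J2 hcsJ1
    have hup1psi : wsum (psiw k) up1 = wsum (psiw k) cstar - 1 := by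
      rw [hup1def, Stmt7.wsum_move _ hJJ1 hcsJ]
      have : psiw k J1 = psiw k J - 1 := by
        simp only [psiw, hJdef, hJ1def]
        push_cast
        ring
      rw [this]; ring
    have hup2psi : wsum (psiw k) up2 = wsum (psiw k) cstar - 1 := by
      rw [hup2def, Stmt7.wsum_move _ hJ1J2 hcsJ1]
      have : psiw k J2 = psiw k J1 - 1 := by
        simp only [psiw, hJ1def, hJ2def]
        push_cast
        ring
      rw [this]; ring
    -- choose the big-gap move and the strictly-between element
    obtain ⟨cB, y, hvB, hΨB, hyG, hylow, hyhigh⟩ :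
        ∃ (cB : Fin k → ℕ) (y : ℤ), Valid r h cB ∧
          wsum (psiw k) cB = wsum (psiw k) cstar - 1 ∧ y ∈ G ∧
          wsum b cstar < y ∧ y < wsum b cB := by
      rcases lt_or_gt_of_ne hne with hlt | hgt
      · -- gap at J smaller
        refine ⟨up2, wsum b up1, hup2v, hup2psi, memG _ hup1v, ?_, ?_⟩
        · rw [hup1val]; omega
        · rw [hup1val, hup2val]
          have : b J1 - b J < b J2 - b J1 := hlt
          omega
      · refine ⟨up1, wsum b up2, hup1v, hup1psi, memG _ hup2v, ?_, ?_⟩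
        · rw [hup2val]; omega
        · rw [hup1val, hup2val]
          have : b J2 - b J1 < b J1 - b J := hgt
          omega
    -- the chains
    set ΨE : ℤ := wsum (psiw k) (Etop k r m ε : Fin k → ℕ) with hΨEdef
    set ΨS : ℤ := wsum (psiw k) (Sbot r m ε : Fin k → ℕ) with hΨSdef
    have htopc : ∀ c, Valid r h c → Stmt7.NoUp r c → wsum (psiw k) c = ΨE := by
      intro c hv hno
      rw [Stmt7.noUp_eq_top m ε hh hεr hm (by omega) hpos c hv hno]
    have hbotc : ∀ c, Valid r h c → Stmt7.NoDown r c → wsum (psiw k) c = ΨS := by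
      intro c hv hno
      rw [Stmt7.noDown_eq_bot m ε hh hεr hm (by omega) hpos c hv hno]
    obtain ⟨Sup, hSupG, hSupge, hSupcard⟩ :=
      Stmt7.chainUp b hb G memG ΨE htopc (Stmt7.Psi cB) cB le_rfl hvB
    obtain ⟨Sdn, hSdnG, hSdnle, hSdncard⟩ :=
      Stmt7.chainDown b hb G memG ΨS hbotc cstar hcsv
    have hynotup : y ∉ Sup := fun hmem =>
      absurd (hSupge y hmem) (by omega)
    have hdisj : Disjoint Sdn (insert y Sup) := by
      rw [Finset.disjoint_left]
      intro x hx hx2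
      have hxle := hSdnle x hx
      rcases Finset.mem_insert.1 hx2 with rfl | hx3
      · omega
      · have := hSupge x hx3
        omega
    set U : Finset ℤ := Sdn ∪ insert y Sup with hUdef
    have hUcard : (U.card : ℤ) = Sdn.card + Sup.card + 1 := by
      rw [hUdef, Finset.card_union_of_disjoint hdisj,
        Finset.card_insert_of_notMem hynotup]
      push_cast
      ring
    have hUG : ↑U ⊆ G := by
      intro x hx
      simp only [hUdef, Finset.coe_union, Set.mem_union, Finset.coe_insert,
        Set.mem_insert_iff, Finset.mem_coe] at hx
      rcases hx with hx | hx
      · exact hSdnG hx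
      · rcases hx with rfl | hx
        · exact hyG
        · exact hSupG hx
    have hUle : (U.card : ℤ) ≤ (G.ncard : ℤ) := by
      have h8 : U.card ≤ G.ncard := by
        have h9 := Set.ncard_le_ncard hUG hfin
        rwa [Set.ncard_coe_finset] at h9
      exact_mod_cast h8
    have hΨdiff := Stmt7.psi_diff (k := k) (r := r) m ε hm
    have hcast : (h : ℤ) = (m : ℤ) * r + ε := by exact_mod_cast congrArg (Nat.cast : ℕ → ℤ) hh
    have hident : (h : ℤ) * k - (m : ℤ) ^ 2 * r - 2 * m * ε - ε =
        (m : ℤ) * r * ((k : ℤ) - m) + (ε : ℤ) * ((k : ℤ) - 2 * m - 1) := by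
      rw [hcast]; ring
    linarith [heq, hUle, hUcard, hSupcard, hSdncard, hΨB, hΨdiff, hident]
end

section
/- Let p be prime and A ⊆ Z/pZ nonempty with |A| = k, and let h, r ≥ 1 with r | h, m = h/r, and h ≤ r·k. Then |h^(r)A| ≥ min(p, h·k − r·m² + 1). -/
open Finset Pointwise

open Polynomial

/-- The restricted sumset `h^∧A`: sums of `h` distinct elements of `A`. -/
def distSum {G : Type*} [AddCommGroup G] [DecidableEq G] (m : ℕ) (A : Finset G) : Finset G :=
  (A.powersetCard m).image fun B => ∑ a ∈ B, a

/-- Iterated pointwise sumset of a finset. -/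
def iterFinset {G : Type*} [AddCommGroup G] [DecidableEq G] : ℕ → Finset G → Finset G
  | 0, _ => {0}
  | n + 1, B => iterFinset n B + B

/-- Leading coefficient of a Lagrange basis polynomial. -/
lemma lagrange_basis_top_coeff {F : Type*} [Field F] [DecidableEq F] (S : Finset F) (s : F) (hs : s ∈ S) :
    (Lagrange.basis S id s).coeff (S.card - 1) = ∏ s' ∈ S.erase s, (s - s')⁻¹ := by
  have hinj : Set.InjOn (id : F → F) S := Function.injective_id.injOn
  have hnd : (Lagrange.basis S id s).natDegree = S.card - 1 :=
    Lagrange.natDegree_basis hinj hs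
  rw [← hnd, ← Polynomial.leadingCoeff]
  unfold Lagrange.basis
  rw [Polynomial.leadingCoeff_prod]
  refine Finset.prod_congr rfl fun j hj => ?_
  have hne : (s : F) ≠ j := by
    rw [Finset.mem_erase] at hj
    exact fun hh => hj.1 (by simp [hh])
  unfold Lagrange.basisDivisor
  rw [Polynomial.leadingCoeff_mul, Polynomial.leadingCoeff_C,
    (Polynomial.monic_X_sub_C _).leadingCoeff, mul_one]
  simp

/-- The key single-variable identity: power sums against Lagrange weights. -/
lemma lagrange_power_sum {F : Type*} [Field F] [DecidableEq F] (S : Finset F) (b : ℕ) (hb : b < S.card) :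
    ∑ s ∈ S, s ^ b * ∏ s' ∈ S.erase s, (s - s')⁻¹
      = if b = S.card - 1 then 1 else 0 := by
  have hinj : Set.InjOn (id : F → F) S := Function.injective_id.injOn
  have hX : (X : F[X]) ^ b = Lagrange.interpolate S id (fun s => s ^ b) := by
    refine Lagrange.eq_interpolate hinj ?_ |>.trans ?_
    · exact lt_of_le_of_lt (Polynomial.degree_X_pow_le b) (by exact_mod_cast hb)
    · congr 1; funext s; simp
  have := congrArg (fun q => Polynomial.coeff q (S.card - 1)) hX
  simp only [Lagrange.interpolate_apply, Polynomial.finset_sum_coeff,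
    Polynomial.coeff_C_mul, Polynomial.coeff_X_pow] at this
  have h2 : ∑ x ∈ S, x ^ b * (Lagrange.basis S id x).coeff (S.card-1)
      = ∑ x ∈ S, x ^ b * ∏ x' ∈ S.erase x, (x - x')⁻¹ :=
    Finset.sum_congr rfl fun s hs => by rw [lagrange_basis_top_coeff S s hs]
  rw [← h2, ← this]
  by_cases hbe : b = S.card - 1 <;> simp [hbe, eq_comm]

lemma EH_core (p : ℕ) (hp : p.Prime) (A : Finset (ZMod p)) (h e : ℕ)
    (t : Fin h → ℕ) (ht : StrictMono t) (htk : ∀ i, t i < A.card)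
    (hsum : ∑ i, t i = e + ∑ i : Fin h, (i : ℕ)) (hep : e < p) :
    e < (distSum h A).card := by
  haveI : Fact p.Prime := ⟨hp⟩
  by_contra hcard
  push_neg at hcard
  -- extend `distSum h A` to a set `E` of size exactly `e`
  obtain ⟨E, hDE, -, hEcard⟩ :=
    Finset.exists_subsuperset_card_eq (Finset.subset_univ (distSum h A)) hcard
      (by simpa [ZMod.card p] using hep.le)
  -- choose subsets `S i ⊆ A` of size `t i + 1`
  have hS : ∀ i : Fin h, ∃ B ⊆ A, B.card = t i + 1 :=
    fun i => Finset.exists_subset_card_eq (htk i)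
  choose S hSA hScard using hS
  -- Lagrange weights and weighted power sums
  set w : Fin h → ZMod p → ZMod p := fun i s => ∏ s' ∈ (S i).erase s, (s - s')⁻¹ with hw
  set G : Fin h → ℕ → ZMod p := fun i b => ∑ s ∈ S i, s ^ b * w i s with hG
  have hGval : ∀ i b, b ≤ t i → G i b = if b = t i then (1 : ZMod p) else 0 := by
    intro i b hb
    have := lagrange_power_sum (S i) b (by rw [hScard i]; omega)
    rw [hScard i] at this
    simpa [hG, hw, Finset.prod_inv_distrib] using this
  -- the auxiliary polynomial and function
  set P : Polynomial (ZMod p) := ∏ ε ∈ E, (X - C ε) with hP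
  have hPmonic : P.Monic := monic_prod_of_monic _ _ fun ε _ => monic_X_sub_C ε
  have hPdeg : P.natDegree = e := by
    rw [hP, natDegree_prod_of_monic _ _ fun ε _ => monic_X_sub_C ε]
    simp [hEcard]
  set Φ : (Fin h → ZMod p) → ZMod p :=
    fun x => P.eval (∑ i, x i) * ∏ i, ∏ j ∈ Ioi i, (x j - x i) with hΦ
  -- vanishing of Φ on the grid
  have hvanish : ∀ x ∈ Fintype.piFinset S, Φ x = 0 := by
    intro x hx
    have hxA : ∀ i, x i ∈ A := fun i => hSA i (Fintype.mem_piFinset.mp hx i)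
    simp only [hΦ]
    by_cases hinj : Function.Injective x
    · have hmem : (∑ i, x i) ∈ distSum h A := by
        apply Finset.mem_image.mpr
        refine ⟨Finset.image x Finset.univ, ?_, ?_⟩
        · rw [Finset.mem_powersetCard]
          refine ⟨fun a ha => ?_, ?_⟩
          · obtain ⟨i, -, rfl⟩ := Finset.mem_image.mp ha; exact hxA i
          · rw [Finset.card_image_of_injective _ hinj, Finset.card_univ, Fintype.card_fin]
        · rw [Finset.sum_image (fun a _ b _ hab => hinj hab)]
      have hev : P.eval (∑ i, x i) = 0 := by
        rw [hP, eval_prod]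
        exact Finset.prod_eq_zero (hDE hmem) (by rw [eval_sub, eval_X, eval_C, sub_self])
      rw [hev, zero_mul]
    · apply mul_eq_zero_of_right
      obtain ⟨a, b, hab, hne⟩ := Function.not_injective_iff.mp hinj
      rcases hne.lt_or_gt with hlt | hlt
      · exact Finset.prod_eq_zero (Finset.mem_univ a)
          (Finset.prod_eq_zero (Finset.mem_Ioi.mpr hlt) (by rw [hab, sub_self]))
      · exact Finset.prod_eq_zero (Finset.mem_univ b)
          (Finset.prod_eq_zero (Finset.mem_Ioi.mpr hlt) (by rw [hab, sub_self]))
  -- the grid sum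
  set Sg : ZMod p := ∑ x ∈ Fintype.piFinset S, Φ x * ∏ i, w i (x i) with hSg
  have hzero : Sg = 0 := by
    rw [hSg]
    exact Finset.sum_eq_zero fun x hx => by rw [hvanish x hx, zero_mul]
  -- the combinatorial evaluation of the grid sum
  set Chat : ℤ := ∑ τ : Equiv.Perm (Fin h), (Equiv.Perm.sign τ : ℤ) *
    (if ∀ i, (τ i : ℕ) ≤ t i then (Nat.multinomial Finset.univ fun i => t i - τ i) else 0)
    with hChat
  -- sum of inverse-permutation values
  have hsig : ∀ σ : Equiv.Perm (Fin h), ∑ i : Fin h, ((σ⁻¹ i : Fin h) : ℕ) = ∑ i : Fin h, (i : ℕ) :=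
    fun σ => Equiv.sum_comp σ⁻¹ (fun i : Fin h => (i : ℕ))
  -- product of G values
  have hprodG : ∀ (σ : Equiv.Perm (Fin h)) (d : ℕ), d ≤ e →
      ∀ a ∈ Finset.piAntidiag Finset.univ d,
      (∏ i, G i (a i + ((σ⁻¹ i : Fin h) : ℕ)))
        = if ∀ i, a i + ((σ⁻¹ i : Fin h) : ℕ) = t i then (1 : ZMod p) else 0 := by
    intro σ d hd a ha
    obtain ⟨hasum, -⟩ := Finset.mem_piAntidiag.mp ha
    have hbsum : ∑ i, (a i + ((σ⁻¹ i : Fin h) : ℕ)) ≤ ∑ i, t i := by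
      rw [Finset.sum_add_distrib, hasum, hsig σ, hsum]
      omega
    by_cases hbt : ∀ i, a i + ((σ⁻¹ i : Fin h) : ℕ) = t i
    · rw [if_pos hbt]
      refine Finset.prod_eq_one fun i _ => ?_
      rw [hbt i, hGval i (t i) le_rfl, if_pos rfl]
    · rw [if_neg hbt]
      push_neg at hbt
      obtain ⟨j, hj⟩ := hbt
      have hlt : ∃ j', a j' + ((σ⁻¹ j' : Fin h) : ℕ) < t j' := by
        by_contra hc
        push_neg at hc
        have : ∑ i, t i < ∑ i, (a i + ((σ⁻¹ i : Fin h) : ℕ)) :=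
          Finset.sum_lt_sum (fun i _ => hc i)
            ⟨j, Finset.mem_univ j, lt_of_le_of_ne (hc j) (Ne.symm hj)⟩
        omega
      obtain ⟨j', hj'⟩ := hlt
      refine Finset.prod_eq_zero (Finset.mem_univ j') ?_
      rw [hGval j' _ hj'.le, if_neg hj'.ne]
  have hmain : Sg = (Chat : ZMod p) := by
    have hΦx : ∀ x : Fin h → ZMod p, Φ x * ∏ i, w i (x i)
        = ∑ d ∈ Finset.range (e+1), ∑ σ : Equiv.Perm (Fin h),
            ∑ a ∈ Finset.piAntidiag Finset.univ d,
            (P.coeff d * (Nat.multinomial Finset.univ a : ZMod p)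
              * ((Equiv.Perm.sign σ : ℤ) : ZMod p))
              * ∏ i, (x i ^ (a i + ((σ⁻¹ i : Fin h) : ℕ)) * w i (x i)) := by
      intro x
      have h1 : P.eval (∑ i, x i) = ∑ d ∈ Finset.range (e+1), P.coeff d * (∑ i, x i) ^ d := by
        conv_lhs => rw [Polynomial.eval_eq_sum_range, hPdeg]
      have h2 : (∏ i, ∏ j ∈ Ioi i, (x j - x i))
          = ∑ σ : Equiv.Perm (Fin h), ((Equiv.Perm.sign σ : ℤ) : ZMod p)
              * ∏ i, x i ^ ((σ⁻¹ i : Fin h) : ℕ) := by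
        rw [← Matrix.det_vandermonde, Matrix.det_apply]
        refine Finset.sum_congr rfl fun σ _ => ?_
        rw [Units.smul_def, zsmul_eq_mul]
        congr 1
        rw [← Equiv.prod_comp σ (fun i => x i ^ ((σ⁻¹ i : Fin h) : ℕ))]
        refine Finset.prod_congr rfl fun i _ => ?_
        simp [Matrix.vandermonde_apply]
      simp only [hΦ]
      rw [h1, h2, Finset.sum_mul_sum, Finset.sum_mul]
      refine Finset.sum_congr rfl fun d hd => ?_
      rw [Finset.sum_mul]
      refine Finset.sum_congr rfl fun σ _ => ?_
      rw [Finset.sum_pow_eq_sum_piAntidiag Finset.univ x d, Finset.mul_sum,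
        Finset.sum_mul, Finset.sum_mul]
      refine Finset.sum_congr rfl fun a ha => ?_
      have hsplit : ∏ i, (x i ^ (a i + ((σ⁻¹ i : Fin h) : ℕ)) * w i (x i))
          = ((∏ i, x i ^ a i) * ∏ i, x i ^ ((σ⁻¹ i : Fin h) : ℕ)) * ∏ i, w i (x i) := by
        rw [← Finset.prod_mul_distrib, ← Finset.prod_mul_distrib]
        exact Finset.prod_congr rfl fun i _ => by rw [pow_add]
      rw [hsplit]; ring
    have hSg2 : Sg = ∑ d ∈ Finset.range (e+1), ∑ σ : Equiv.Perm (Fin h),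
        ∑ a ∈ Finset.piAntidiag Finset.univ d,
        (P.coeff d * (Nat.multinomial Finset.univ a : ZMod p)
          * ((Equiv.Perm.sign σ : ℤ) : ZMod p))
          * ∏ i, G i (a i + ((σ⁻¹ i : Fin h) : ℕ)) := by
      rw [hSg]
      rw [Finset.sum_congr rfl fun x _ => hΦx x]
      rw [Finset.sum_comm]
      refine Finset.sum_congr rfl fun d _ => ?_
      rw [Finset.sum_comm]
      refine Finset.sum_congr rfl fun σ _ => ?_
      rw [Finset.sum_comm]
      refine Finset.sum_congr rfl fun a _ => ?_
      rw [← Finset.mul_sum]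
      congr 1
      exact (Finset.prod_univ_sum S
        (fun i s => s ^ (a i + ((σ⁻¹ i : Fin h) : ℕ)) * w i s)).symm
    rw [hSg2, Finset.sum_comm]
    have hinner : ∀ σ : Equiv.Perm (Fin h),
        (∑ d ∈ Finset.range (e+1), ∑ a ∈ Finset.piAntidiag Finset.univ d,
          (P.coeff d * (Nat.multinomial Finset.univ a : ZMod p)
            * ((Equiv.Perm.sign σ : ℤ) : ZMod p))
            * ∏ i, G i (a i + ((σ⁻¹ i : Fin h) : ℕ)))
        = ((Equiv.Perm.sign σ : ℤ) : ZMod p) *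
            (if ∀ i, ((σ⁻¹ i : Fin h) : ℕ) ≤ t i
              then (Nat.multinomial Finset.univ (fun i => t i - ((σ⁻¹ i : Fin h) : ℕ)) : ZMod p)
              else 0) := by
      intro σ
      have hrw : ∀ d ∈ Finset.range (e+1), ∀ a ∈ Finset.piAntidiag Finset.univ d,
          (P.coeff d * (Nat.multinomial Finset.univ a : ZMod p)
            * ((Equiv.Perm.sign σ : ℤ) : ZMod p))
            * ∏ i, G i (a i + ((σ⁻¹ i : Fin h) : ℕ))
          = (P.coeff d * (Nat.multinomial Finset.univ a : ZMod p)
            * ((Equiv.Perm.sign σ : ℤ) : ZMod p))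
            * (if ∀ i, a i + ((σ⁻¹ i : Fin h) : ℕ) = t i then (1:ZMod p) else 0) := by
        intro d hd a ha
        rw [hprodG σ d (by simp only [Finset.mem_range] at hd; omega) a ha]
      rw [Finset.sum_congr rfl fun d hd => Finset.sum_congr rfl fun a ha => hrw d hd a ha]
      by_cases hcond : ∀ i, ((σ⁻¹ i : Fin h) : ℕ) ≤ t i
      · rw [if_pos hcond]
        have ha₀sum : ∑ i, (t i - ((σ⁻¹ i : Fin h) : ℕ)) = e := by
          rw [Finset.sum_tsub_distrib Finset.univ (fun i _ => hcond i), hsig σ]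
          omega
        have ha₀mem : (fun i => t i - ((σ⁻¹ i : Fin h) : ℕ)) ∈ Finset.piAntidiag Finset.univ e :=
          Finset.mem_piAntidiag.mpr ⟨ha₀sum, fun i _ => Finset.mem_univ i⟩
        have hside1 : ∀ d ∈ Finset.range (e+1), d ≠ e →
            (∑ a ∈ Finset.piAntidiag Finset.univ d,
              P.coeff d * (Nat.multinomial Finset.univ a : ZMod p)
                * ((Equiv.Perm.sign σ : ℤ) : ZMod p)
                * if ∀ i, a i + ((σ⁻¹ i : Fin h) : ℕ) = t i then (1:ZMod p) else 0) = 0 := by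
          intro d hd hde
          refine Finset.sum_eq_zero fun a ha => ?_
          obtain ⟨hasum, -⟩ := Finset.mem_piAntidiag.mp ha
          rw [if_neg, mul_zero]
          intro hall
          apply hde
          have hts : ∑ i, (a i + ((σ⁻¹ i : Fin h) : ℕ)) = ∑ i, t i :=
            Finset.sum_congr rfl fun i _ => hall i
          rw [Finset.sum_add_distrib, hasum, hsig σ, hsum] at hts
          omega
        have hside2 : ∀ a ∈ Finset.piAntidiag Finset.univ e,
            a ≠ (fun i => t i - ((σ⁻¹ i : Fin h) : ℕ)) →
            (P.coeff e * (Nat.multinomial Finset.univ a : ZMod p)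
              * ((Equiv.Perm.sign σ : ℤ) : ZMod p)
              * if ∀ i, a i + ((σ⁻¹ i : Fin h) : ℕ) = t i then (1:ZMod p) else 0) = 0 := by
          intro a ha hne
          rw [if_neg, mul_zero]
          intro hall
          apply hne
          funext i
          have h1 := hall i
          have h2 := hcond i
          omega
        rw [Finset.sum_eq_single_of_mem e (Finset.self_mem_range_succ e) hside1,
          Finset.sum_eq_single_of_mem _ ha₀mem hside2]
        have hcoeff : P.coeff e = 1 := by
          rw [← hPdeg]; exact hPmonic.coeff_natDegree
        rw [if_pos (fun i => by
          show t i - ((σ⁻¹ i : Fin h) : ℕ) + ((σ⁻¹ i : Fin h) : ℕ) = t i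
          have := hcond i; omega), hcoeff]
        ring
      · rw [if_neg hcond]
        rw [Finset.sum_eq_zero, mul_zero]
        intro d hd
        refine Finset.sum_eq_zero fun a ha => ?_
        rw [if_neg, mul_zero]
        intro hall
        exact hcond fun i => by have := hall i; omega
    rw [Finset.sum_congr rfl fun σ _ => hinner σ]
    -- reindex by inversion and compare with Chat
    rw [hChat]
    push_cast [apply_ite (fun z : ℤ => (z : ZMod p))]
    rw [← Equiv.sum_comp (Equiv.inv (Equiv.Perm (Fin h)))
      (fun τ => ((Equiv.Perm.sign τ : ℤ) : ZMod p) *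
        (if ∀ i, ((τ i : Fin h) : ℕ) ≤ t i
          then (Nat.multinomial Finset.univ (fun i => t i - ((τ i : Fin h) : ℕ)) : ZMod p)
          else 0))]
    refine Finset.sum_congr rfl fun σ _ => ?_
    simp only [Equiv.inv_apply]
    rw [Equiv.Perm.sign_inv]
  -- the determinant evaluation of Chat
  have htau : ∀ τ : Equiv.Perm (Fin h), ∑ i : Fin h, ((τ i : Fin h) : ℕ) = ∑ i : Fin h, (i : ℕ) :=
    fun τ => Equiv.sum_comp τ (fun i : Fin h => (i : ℕ))
  have hdet : Chat * ∏ i, ((t i).factorial : ℤ)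
      = (e.factorial : ℤ) * ∏ i : Fin h, ∏ j ∈ Ioi i, ((t j : ℤ) - t i) := by
    have key : (Chat : ℚ) * ∏ i, ((t i).factorial : ℚ)
        = (e.factorial : ℚ) * ∏ i : Fin h, ∏ j ∈ Ioi i, ((t j : ℚ) - t i) := by
      rw [hChat]
      push_cast [apply_ite (fun z : ℤ => (z : ℚ))]
      rw [Finset.sum_mul]
      have hterm : ∀ τ : Equiv.Perm (Fin h),
          (((Equiv.Perm.sign τ : ℤ) : ℚ) *
            (if ∀ i, ((τ i : Fin h) : ℕ) ≤ t i
              then ((Nat.multinomial Finset.univ fun i => t i - ((τ i : Fin h) : ℕ)) : ℚ)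
              else 0)) * ∏ i, ((t i).factorial : ℚ)
          = (e.factorial : ℚ) * (((Equiv.Perm.sign τ : ℤ) : ℚ)
              * ∏ i, (((t i).descFactorial ((τ i : Fin h) : ℕ)) : ℚ)) := by
        intro τ
        by_cases hcond : ∀ i, ((τ i : Fin h) : ℕ) ≤ t i
        · rw [if_pos hcond]
          have hnat : (Nat.multinomial Finset.univ fun i => t i - ((τ i : Fin h) : ℕ))
              * ∏ i, (t i).factorial
              = e.factorial * ∏ i, (t i).descFactorial ((τ i : Fin h) : ℕ) := by
            have h1 : ∀ i : Fin h, (t i).factorial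
                = (t i - ((τ i : Fin h) : ℕ)).factorial
                  * (t i).descFactorial ((τ i : Fin h) : ℕ) :=
              fun i => (Nat.factorial_mul_descFactorial (hcond i)).symm
            have h3 : ∑ i, (t i - ((τ i : Fin h) : ℕ)) = e := by
              rw [Finset.sum_tsub_distrib Finset.univ (fun i _ => hcond i), htau τ]
              omega
            have h2 : ∏ i, (t i).factorial
                = (∏ i, (t i - ((τ i : Fin h) : ℕ)).factorial)
                  * ∏ i, (t i).descFactorial ((τ i : Fin h) : ℕ) := by
              rw [← Finset.prod_mul_distrib]
              exact Finset.prod_congr rfl fun i _ => h1 i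
            rw [h2, ← mul_assoc, mul_comm (Nat.multinomial _ _), Nat.multinomial_spec, h3]
          have hq := congrArg (fun n : ℕ => (n : ℚ)) hnat
          push_cast at hq
          linear_combination ((Equiv.Perm.sign τ : ℤ) : ℚ) * hq
        · rw [if_neg hcond]
          push_neg at hcond
          obtain ⟨i0, hi0⟩ := hcond
          have hz : (((t i0).descFactorial ((τ i0 : Fin h) : ℕ)) : ℚ) = 0 := by
            rw [Nat.descFactorial_eq_zero_iff_lt.mpr hi0, Nat.cast_zero]
          have hz2 : (∏ i, (((t i).descFactorial ((τ i : Fin h) : ℕ)) : ℚ)) = 0 :=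
            Finset.prod_eq_zero (Finset.mem_univ i0) hz
          rw [hz2]
          ring
      rw [Finset.sum_congr rfl fun τ _ => hterm τ, ← Finset.mul_sum]
      congr 1
      have hdet2 : (∑ τ : Equiv.Perm (Fin h), ((Equiv.Perm.sign τ : ℤ) : ℚ)
            * ∏ i, (((t i).descFactorial ((τ i : Fin h) : ℕ)) : ℚ))
          = Matrix.det (Matrix.of fun i j : Fin h => (((t j).descFactorial (i : ℕ)) : ℚ)) := by
        rw [Matrix.det_apply]
        refine Finset.sum_congr rfl fun τ _ => ?_
        rw [Units.smul_def, zsmul_eq_mul]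
        rfl
      rw [hdet2, ← Matrix.det_transpose]
      have hMT : (Matrix.of fun i j : Fin h => (((t j).descFactorial (i : ℕ)) : ℚ)).transpose
          = Matrix.of fun i j : Fin h => (descPochhammer ℚ (j : ℕ)).eval ((t i : ℚ)) := by
        ext i j
        simp only [Matrix.transpose_apply, Matrix.of_apply]
        exact (descPochhammer_eval_eq_descFactorial ℚ (t i) (j : ℕ)).symm
      rw [hMT, ← Matrix.det_eval_matrixOfPolynomials_eq_det_vandermonde
        (fun i : Fin h => (t i : ℚ)) (fun j : Fin h => descPochhammer ℚ (j : ℕ))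
        (fun j => descPochhammer_natDegree ℚ (j : ℕ)) (fun j => monic_descPochhammer ℚ (j : ℕ)),
        Matrix.det_vandermonde]
    exact_mod_cast key
  -- nonvanishing mod p
  have hk : A.card ≤ p := by simpa [ZMod.card p] using A.card_le_univ
  have hnz : (Chat : ZMod p) ≠ 0 := by
    intro h0
    have hcast : (Chat : ZMod p) * ∏ i, ((t i).factorial : ZMod p)
        = (e.factorial : ZMod p) * ∏ i : Fin h, ∏ j ∈ Ioi i, ((t j : ZMod p) - (t i : ZMod p)) := by
      exact_mod_cast congrArg (Int.cast : ℤ → ZMod p) hdet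
    rw [h0, zero_mul] at hcast
    have hfac : ((e.factorial : ℕ) : ZMod p) ≠ 0 := by
      intro hdvd0
      rw [ZMod.natCast_eq_zero_iff] at hdvd0
      have := (Nat.Prime.dvd_factorial hp).mp hdvd0
      omega
    have hprod : (∏ i : Fin h, ∏ j ∈ Ioi i, ((t j : ZMod p) - (t i : ZMod p))) ≠ 0 := by
      rw [Finset.prod_ne_zero_iff]
      intro i _
      rw [Finset.prod_ne_zero_iff]
      intro j hj
      have hij : i < j := Finset.mem_Ioi.mp hj
      have hlt : t i < t j := ht hij
      have htjp : t j < p := lt_of_lt_of_le (htk j) hk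
      intro hzero
      have hsub : (((t j - t i : ℕ)) : ZMod p) = 0 := by
        rw [Nat.cast_sub hlt.le]; exact hzero
      rw [ZMod.natCast_eq_zero_iff] at hsub
      have := Nat.le_of_dvd (by omega) hsub
      omega
    exact absurd hcast.symm (mul_ne_zero hfac hprod)
  rw [hzero] at hmain
  exact hnz hmain.symm

/-- Generalized Erdős–Heilbronn (Dias da Silva–Hamidoune). -/
lemma EH (p : ℕ) (hp : p.Prime) (A : Finset (ZMod p)) (m : ℕ)
    (hm1 : 1 ≤ m) (hmk : m ≤ A.card) :
    min p (m * (A.card - m) + 1) ≤ (distSum m A).card := by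
  set k := A.card with hkdef
  set K := k - m with hK
  set e := min (p - 1) (m * K) with he
  have hp2 : 2 ≤ p := hp.two_le
  have heK : e ≤ m * K := min_le_right _ _
  have hep1 : e ≤ p - 1 := min_le_left _ _
  have hep : e < p := by omega
  -- construct the exponents
  have hT : ∃ t : Fin m → ℕ, StrictMono t ∧ (∀ i, t i < k) ∧
      ∑ i, t i = e + ∑ i : Fin m, (i : ℕ) := by
    rcases Nat.eq_zero_or_pos K with hK0 | hK0
    · have hmK0 : m * K = 0 := by rw [hK0, Nat.mul_zero]
      have he0 : e = 0 := by omega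
      exact ⟨fun i => (i : ℕ), fun a b hab => by simpa using hab,
        fun i => lt_of_lt_of_le i.isLt hmk,
        by rw [he0, zero_add]⟩
    · set q := e / K with hq
      set s := e % K with hs
      have hdiv : e = q * K + s := by rw [Nat.mul_comm]; exact (Nat.div_add_mod e K).symm
      have hsK : s < K := Nat.mod_lt _ hK0
      have hqm : q ≤ m := by
        have h1 : e / K ≤ m * K / K := Nat.div_le_div_right heK
        rwa [Nat.mul_div_cancel m hK0] at h1
      clear_value q s
      set δ : ℕ → ℕ := fun v => if m ≤ v + q then K else if v + q + 1 = m then s else 0 with hδ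
      refine ⟨fun i => (i : ℕ) + δ (i : ℕ), ?_, ?_, ?_⟩
      · intro a b hab
        have hab' : (a : ℕ) < (b : ℕ) := hab
        have hmono : δ (a : ℕ) ≤ δ (b : ℕ) := by
          rw [hδ]; dsimp only; split_ifs <;> omega
        show (a : ℕ) + δ (a : ℕ) < (b : ℕ) + δ (b : ℕ)
        omega
      · intro i
        have hi : (i : ℕ) < m := i.isLt
        have hδK : δ (i : ℕ) ≤ K := by rw [hδ]; dsimp only; split_ifs <;> omega
        show (i : ℕ) + δ (i : ℕ) < k
        omega
      · rw [Finset.sum_add_distrib, add_comm]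
        congr 1
        rw [Fin.sum_univ_eq_sum_range δ m]
        have hsplit : ∀ v, δ v = (if m - q ≤ v then K else 0) + (if v + q + 1 = m then s else 0) := by
          intro v
          rw [hδ]; dsimp only; split_ifs <;> omega
        rw [Finset.sum_congr rfl fun v _ => hsplit v, Finset.sum_add_distrib]
        have hA : ∑ v ∈ Finset.range m, (if m - q ≤ v then K else 0) = q * K := by
          rw [Finset.range_eq_Ico, ← Finset.sum_Ico_consecutive _ (Nat.zero_le (m - q)) (Nat.sub_le m q)]
          rw [Finset.sum_congr rfl (fun v hv => if_neg (by
            rw [Finset.mem_Ico] at hv; omega)),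
            Finset.sum_congr rfl (fun v hv => if_pos (by
            rw [Finset.mem_Ico] at hv; omega))]
          simp [Nat.card_Ico, Nat.sub_sub_self hqm, mul_comm]
        have hB : ∑ v ∈ Finset.range m, (if v + q + 1 = m then s else 0) = s := by
          rcases Nat.lt_or_ge q m with hqlt | hqge
          · have : ∀ v, (v + q + 1 = m) ↔ (v = m - q - 1) := fun v => by omega
            simp only [this]
            rw [Finset.sum_ite_eq' (Finset.range m) (m - q - 1) (fun _ => s)]
            rw [if_pos (Finset.mem_range.mpr (by omega))]
          · have hqm' : q = m := by omega
            have hs0 : s = 0 := by nlinarith [hdiv, heK, hqm']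
            rw [hs0]
            simp
        rw [hA, hB]
        omega
  obtain ⟨t, ht, htk, hsum⟩ := hT
  have := EH_core p hp A m e t ht (fun i => htk i) hsum hep
  omega

lemma iterFinset_nonempty {G : Type*} [AddCommGroup G] [DecidableEq G] (r : ℕ)
    (B : Finset G) (hB : B.Nonempty) : (iterFinset r B).Nonempty := by
  induction r with
  | zero => exact ⟨0, by simp [iterFinset]⟩
  | succ n ih => exact ih.add hB

lemma iterFinset_card (p : ℕ) (hp : p.Prime) (B : Finset (ZMod p)) (hB : B.Nonempty) (r : ℕ) :
    min p (r * (B.card - 1) + 1) ≤ (iterFinset r B).card := by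
  induction r with
  | zero =>
    have : (iterFinset 0 B : Finset (ZMod p)).card = 1 := by simp [iterFinset]
    rw [this]
    have := hp.two_le
    simp only [Nat.zero_mul, zero_add]
    omega
  | succ n ih =>
    have hcd := ZMod.cauchy_davenport hp (iterFinset_nonempty n B hB) hB
    have hmul : (n + 1) * (B.card - 1) = n * (B.card - 1) + (B.card - 1) := by ring
    have hB1 : 1 ≤ B.card := hB.card_pos
    show min p ((n+1) * (B.card - 1) + 1) ≤ (iterFinset n B + B).card
    omega

lemma iter_subset_genSum {G : Type*} [AddCommGroup G] [DecidableEq G] (A : Finset G) (m : ℕ) :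
    ∀ r : ℕ, ∀ x ∈ iterFinset r (distSum m A), x ∈ genSum r (m * r) A := by
  intro r
  induction r with
  | zero =>
    intro x hx
    have : x = 0 := by simpa [iterFinset] using hx
    exact ⟨fun _ => 0, fun a => le_rfl, fun a ha => absurd rfl ha, by simp, by simp [this]⟩
  | succ n ih =>
    intro x hx
    obtain ⟨y, hy, z, hz, rfl⟩ := Finset.mem_add.mp hx
    obtain ⟨cy, hcy1, hcy2, hcy3, hcy4⟩ := ih y hy
    obtain ⟨B, hB, rfl⟩ := Finset.mem_image.mp hz
    rw [Finset.mem_powersetCard] at hB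
    refine ⟨fun a => cy a + (if a ∈ B then 1 else 0), ?_, ?_, ?_, ?_⟩
    · intro a
      have := hcy1 a
      by_cases haB : a ∈ B <;> simp [haB] <;> omega
    · intro a ha
      by_cases haB : a ∈ B
      · exact hB.1 haB
      · simp only [haB, if_false, add_zero] at ha
        exact hcy2 a ha
    · rw [Finset.sum_add_distrib, hcy3]
      have hsum1 : ∑ a ∈ A, (if a ∈ B then 1 else 0) = B.card := by
        rw [Finset.sum_ite_mem, Finset.inter_eq_right.mpr hB.1, Finset.card_eq_sum_ones]
      rw [hsum1, hB.2]
      ring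
    · rw [Finset.sum_congr rfl (fun a _ => add_smul (cy a) _ a), Finset.sum_add_distrib, hcy4]
      congr 1
      have : ∀ a : G, (if a ∈ B then 1 else 0 : ℕ) • a = if a ∈ B then a else 0 := by
        intro a; split_ifs <;> simp
      rw [Finset.sum_congr rfl (fun a _ => this a), Finset.sum_ite_mem,
        Finset.inter_eq_right.mpr hB.1]

theorem stmt8 (p : ℕ) (hp : p.Prime) (A : Finset (ZMod p)) (k h m r : ℕ)
    (hA : A.Nonempty) (hk : A.card = k)
    (hh1 : 1 ≤ h) (hr : 1 ≤ r) (hh : h = m * r) (h2 : h ≤ r * k) :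
    ((genSum r h A).ncard : ℤ) ≥
      min (p : ℤ) ((h : ℤ) * k - (r : ℤ) * (m : ℤ) ^ 2 + 1) := by
  haveI : Fact p.Prime := ⟨hp⟩
  have hm1 : 1 ≤ m := by
    rcases Nat.eq_zero_or_pos m with h0 | h0
    · subst h0; simp at hh; omega
    · exact h0
  have hmk : m ≤ k := by
    have h4 : r * m ≤ r * k := by rw [Nat.mul_comm r m]; omega
    exact Nat.le_of_mul_le_mul_left h4 hr
  subst hk
  -- EH bound
  have hEH := EH p hp A m hm1 hmk
  -- iterated CD bound
  have hD : (distSum m A).Nonempty := by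
    obtain ⟨B, hB⟩ := Finset.exists_subset_card_eq hmk
    exact ⟨∑ a ∈ B, a, Finset.mem_image.mpr ⟨B, Finset.mem_powersetCard.mpr ⟨hB.1, hB.2⟩, rfl⟩⟩
  have hCD := iterFinset_card p hp (distSum m A) hD r
  -- containment
  have hsub : ↑(iterFinset r (distSum m A)) ⊆ genSum r h A := by
    intro x hx
    rw [hh]
    exact iter_subset_genSum A m r x (by exact_mod_cast hx)
  have hfin : (genSum r h A).Finite := Set.toFinite _
  have hmono : (iterFinset r (distSum m A)).card ≤ (genSum r h A).ncard := by
    rw [← Set.ncard_coe_finset]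
    exact Set.ncard_le_ncard hsub hfin
  -- numeric assembly (natural numbers)
  have hnat : min p (r * (m * (A.card - m)) + 1) ≤ (genSum r h A).ncard := by
    have e1 : r * (m * (A.card - m)) + 1 ≤ r * ((distSum m A).card - 1) + 1 ∨
        p ≤ r * ((distSum m A).card - 1) + 1 := by
      rcases Nat.le_total p (m * (A.card - m) + 1) with hc | hc
      · right
        have h3 : p - 1 ≤ (distSum m A).card - 1 := by omega
        have h4 : 1 * (p - 1) ≤ r * ((distSum m A).card - 1) :=
          Nat.mul_le_mul hr h3
        have := hp.two_le
        omega
      · left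
        have h3 : m * (A.card - m) ≤ (distSum m A).card - 1 := by omega
        have h4 : r * (m * (A.card - m)) ≤ r * ((distSum m A).card - 1) :=
          Nat.mul_le_mul_left r h3
        omega
    omega
  -- conversion to integers
  have hcast : ((h : ℤ) * A.card - (r : ℤ) * (m : ℤ) ^ 2 + 1)
      = ((r * (m * (A.card - m)) + 1 : ℕ) : ℤ) := by
    push_cast [Nat.cast_sub hmk]
    rw [hh]
    push_cast
    ring
  rw [ge_iff_le, hcast]
  exact_mod_cast hnat
end

section
/- Let A be a finite nonempty set of integers with |A| = k and let h, r ≥ 1 with r | h, m = h/r ≥ 1, and h ≤ r·k. Then |h^(r)A| ≥ h·k − r·m² + 1, with equality when A is an arithmetic progression. -/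
open Finset Pointwise

namespace Aux9

def steps (K h t u : ℕ) : ℕ := min K (t - (h - 1 - u) * K)

def pos (r K h t u : ℕ) : ℕ := u / r + steps K h t u

lemma pos_mono (r K h t u : ℕ) : pos r K h t u ≤ pos r K h (t+1) u := by
  unfold pos steps
  exact Nat.add_le_add_left (min_le_min le_rfl (by omega)) _

lemma pos_le (r K h t u : ℕ) (hu : u < h) : pos r K h t u ≤ (h-1)/r + K := by
  unfold pos steps
  have h1 : u / r ≤ (h-1)/r := Nat.div_le_div_right (by omega)
  have h2 : min K (t - (h-1-u)*K) ≤ K := min_le_left _ _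
  omega

lemma no_collision (r K h t : ℕ) {u v : ℕ} (huv : u < v) (hv : v < h)
    (hd : u/r < v/r) (hpos : pos r K h t u = pos r K h t v) : False := by
  unfold pos steps at hpos
  have hsuK : min K (t - (h-1-u)*K) ≤ K := min_le_left _ _
  have hsvK : min K (t - (h-1-v)*K) ≤ K := min_le_left _ _
  have hsv_lt : min K (t-(h-1-v)*K) < min K (t-(h-1-u)*K) := by omega
  have hsu1 : 1 ≤ min K (t - (h-1-u)*K) := by omega
  obtain ⟨hK, htu⟩ := le_min_iff.mp hsu1
  have h2 : t - (h-1-v)*K < K := by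
    rcases min_lt_iff.mp (lt_of_lt_of_le hsv_lt hsuK) with h | h
    · omega
    · exact h
  have h3 : (h-1-v)*K + K ≤ (h-1-u)*K := by
    calc (h-1-v)*K + K = (h-1-v+1)*K := by ring
    _ ≤ (h-1-u)*K := Nat.mul_le_mul_right K (by omega)
  omega

lemma div_lt_div (r a b : ℕ) (hab : a < b) (hmod : a % r = b % r) : a / r < b / r := by
  have h1 : a / r ≤ b / r := Nat.div_le_div_right hab.le
  rcases h1.lt_or_eq with h | h
  · exact h
  · exfalso
    have ha := Nat.div_add_mod a r
    have hb := Nat.div_add_mod b r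
    rw [h, hmod] at ha
    omega

lemma fiber_card_le (r K h t i : ℕ) (hr : 1 ≤ r) :
    ((Finset.range h).filter (fun u => pos r K h t u = i)).card ≤ r := by
  have key : ((Finset.range h).filter (fun u => pos r K h t u = i)).card
      ≤ (Finset.range r).card := by
    apply Finset.card_le_card_of_injOn (fun u => u % r)
    · intro u _
      simp [Finset.mem_range, Nat.mod_lt _ hr]
    · intro u hu v hv huv
      simp only [Finset.mem_coe, Finset.mem_filter, Finset.mem_range] at hu hv
      by_contra hne
      rcases lt_or_gt_of_ne hne with hlt | hlt
      · exact no_collision r K h t hlt hv.1 (div_lt_div r u v hlt huv) (hu.2.trans hv.2.symm)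
      · exact no_collision r K h t hlt hu.1 (div_lt_div r v u hlt huv.symm) (hv.2.trans hu.2.symm)
  simpa using key


/-- `n`-th smallest element of `A` -/
noncomputable def elt (A : Finset ℤ) (n : ℕ) : ℤ := (A.sort (·≤·)).getD n 0

lemma elt_mem (A : Finset ℤ) (n : ℕ) (hn : n < A.card) : elt A n ∈ A := by
  unfold elt
  rw [List.getD_eq_getElem _ _ (by rw [Finset.length_sort]; exact hn)]
  exact (Finset.mem_sort _).mp (List.getElem_mem _)

lemma elt_lt (A : Finset ℤ) {i j : ℕ} (hij : i < j) (hj : j < A.card) :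
    elt A i < elt A j := by
  have hl : (A.sort (·≤·)).length = A.card := Finset.length_sort _
  unfold elt
  rw [List.getD_eq_getElem _ _ (by omega), List.getD_eq_getElem _ _ (by omega)]
  exact (A.sortedLT_sort).getElem_lt_getElem_iff.mpr hij

lemma elt_le (A : Finset ℤ) {i j : ℕ} (hij : i ≤ j) (hj : j < A.card) :
    elt A i ≤ elt A j := by
  rcases hij.lt_or_eq with h | h
  · exact (elt_lt A h hj).le
  · rw [h]

lemma elt_inj (A : Finset ℤ) {i j : ℕ} (hi : i < A.card) (hj : j < A.card)
    (hij : elt A i = elt A j) : i = j := by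
  rcases lt_trichotomy i j with h | h | h
  · exact absurd hij (elt_lt A h hj).ne
  · exact h
  · exact absurd hij.symm (elt_lt A h hi).ne


/-- the element of `genSum` at time `t` -/
noncomputable def E (A : Finset ℤ) (r K h t : ℕ) : ℤ :=
  ∑ u ∈ Finset.range h, elt A (pos r K h t u)

lemma posk (A : Finset ℤ) (r K h t k : ℕ) (hk : A.card = k) (hK : (h-1)/r + K < k) :
    ∀ u < h, pos r K h t u < A.card := by
  intro u hu
  rw [hk]
  exact lt_of_le_of_lt (pos_le r K h t u hu) hK

lemma E_mem (A : Finset ℤ) (r K h t k : ℕ) (hr : 1 ≤ r)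
    (hk : A.card = k) (hK : (h-1)/r + K < k) :
    E A r K h t ∈ genSum r h A := by
  have hpk := posk A r K h t k hk hK
  have hmaps : ∀ u ∈ Finset.range h, elt A (pos r K h t u) ∈ A := by
    intro u hu
    exact elt_mem A _ (hpk u (Finset.mem_range.mp hu))
  refine ⟨fun x => ((Finset.range h).filter (fun u => elt A (pos r K h t u) = x)).card,
    ?_, ?_, ?_, ?_⟩
  · intro x
    rcases Finset.eq_empty_or_nonempty
        ((Finset.range h).filter (fun u => elt A (pos r K h t u) = x)) with he | ⟨u₀, hu₀⟩
    · simp [he]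
    · simp only [Finset.mem_filter, Finset.mem_range] at hu₀
      have hsub : (Finset.range h).filter (fun u => elt A (pos r K h t u) = x)
          ⊆ (Finset.range h).filter (fun u => pos r K h t u = pos r K h t u₀) := by
        intro u hu
        simp only [Finset.mem_filter, Finset.mem_range] at hu ⊢
        exact ⟨hu.1, elt_inj A (hpk u hu.1) (hpk u₀ hu₀.1) (hu.2.trans hu₀.2.symm)⟩
      exact le_trans (Finset.card_le_card hsub) (fiber_card_le r K h t _ hr)
  · intro x hx
    obtain ⟨u, hu⟩ := Finset.card_pos.mp (Nat.pos_of_ne_zero hx)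
    simp only [Finset.mem_filter, Finset.mem_range] at hu
    exact hu.2 ▸ hmaps u (Finset.mem_range.mpr hu.1)
  · have := Finset.card_eq_sum_card_fiberwise hmaps
    simpa using this.symm
  · unfold E
    rw [← Finset.sum_fiberwise_of_maps_to hmaps (fun u => elt A (pos r K h t u))]
    apply Finset.sum_congr rfl
    intro x _
    rw [Finset.sum_congr rfl (fun u hu => (Finset.mem_filter.mp hu).2), Finset.sum_const]

lemma E_lt (A : Finset ℤ) (r K h t k : ℕ) (hr : 1 ≤ r)
    (hk : A.card = k) (hK : (h-1)/r + K < k) (ht : t < h*K) :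
    E A r K h t < E A r K h (t+1) := by
  have hK0 : 0 < K := by
    rcases Nat.eq_zero_or_pos K with h0 | h0
    · subst h0; simp at ht
    · exact h0
  have hq : t / K < h := (Nat.div_lt_iff_lt_mul hK0).mpr ht
  have h0 : 0 < h := lt_of_le_of_lt (Nat.zero_le _) hq
  apply Finset.sum_lt_sum
  · intro u hu
    exact elt_le A (pos_mono r K h t u)
      (posk A r K h (t+1) k hk hK u (Finset.mem_range.mp hu))
  · obtain ⟨q, hgq⟩ : ∃ q, t / K = q := ⟨_, rfl⟩
    obtain ⟨s, hgs⟩ : ∃ s, t % K = s := ⟨_, rfl⟩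
    rw [hgq] at hq
    have hu' : h - 1 - q < h := by omega
    have hs : s < K := hgs ▸ Nat.mod_lt _ hK0
    have e0 : q*K + s = t := by rw [← hgq, ← hgs, Nat.mul_comm]; exact Nat.div_add_mod t K
    have e1 : t - q*K = s := by omega
    have e2 : t + 1 - q*K = s + 1 := by omega
    have hstep : pos r K h (t+1) (h-1-q) = pos r K h t (h-1-q) + 1 := by
      unfold pos steps
      have h1 : h - 1 - (h-1-q) = q := by omega
      rw [h1, e1, e2, min_eq_right hs.le, min_eq_right (Nat.succ_le_of_lt hs)]
      omega
    refine ⟨h - 1 - q, Finset.mem_range.mpr hu', ?_⟩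
    rw [hstep]
    have hb := posk A r K h (t+1) k hk hK (h-1-q) hu'
    rw [hstep] at hb
    exact elt_lt A (Nat.lt_succ_self _) hb

lemma E_chain (A : Finset ℤ) (r K h k : ℕ) (hr : 1 ≤ r)
    (hk : A.card = k) (hK : (h-1)/r + K < k) :
    ∀ t ≤ h*K, ∀ s < t, E A r K h s < E A r K h t := by
  intro t
  induction t with
  | zero => intro _ s hs; omega
  | succ t ih =>
    intro ht s hs
    rcases Nat.lt_succ_iff_lt_or_eq.mp hs with h' | h'
    · exact lt_trans (ih (by omega) s h') (E_lt A r K h t k hr hk hK (by omega))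
    · subst h'; exact E_lt A r K h s k hr hk hK (by omega)


lemma genSum_finite (r h : ℕ) (A : Finset ℤ) : (genSum r h A).Finite := by
  classical
  have hsub : genSum r h A ⊆
      Set.range (fun g : ({x // x ∈ A} → Fin (r+1)) =>
        ∑ a ∈ A.attach, ((g a : ℕ) • (a : ℤ))) := by
    rintro x ⟨c, hc1, -, -, hc4⟩
    refine ⟨fun a => ⟨c a, Nat.lt_succ_of_le (hc1 a)⟩, ?_⟩
    exact (Finset.sum_attach A fun a => c a • a).trans hc4
  exact (Set.finite_range _).subset hsub

lemma lower_card (A : Finset ℤ) (k h m r : ℕ) (hk : A.card = k) (hm : 1 ≤ m) (hr : 1 ≤ r)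
    (hh : h = m * r) (hmk : m ≤ k) :
    h * (k - m) + 1 ≤ (genSum r h A).ncard := by
  set K := k - m with hKdef
  have hK : (h-1)/r + K < k := by
    have hpos : 1 ≤ m * r := Nat.mul_le_mul hm hr
    have hlt : (h-1)/r < m := (Nat.div_lt_iff_lt_mul hr).mpr (by omega)
    obtain ⟨c, hc⟩ : ∃ c, (h-1)/r = c := ⟨_, rfl⟩
    rw [hc] at hlt ⊢
    omega
  have hcard : ((Finset.range (h*K+1)).image (E A r K h)).card = h*K+1 := by
    rw [Finset.card_image_of_injOn, Finset.card_range]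
    intro s hs t ht hst
    simp only [Finset.mem_coe, Finset.mem_range] at hs ht
    by_contra hne
    rcases lt_or_gt_of_ne hne with hlt | hlt
    · exact (E_chain A r K h k hr hk hK t (by omega) s hlt).ne hst
    · exact (E_chain A r K h k hr hk hK s (by omega) t hlt).ne hst.symm
  have hsub : ↑((Finset.range (h*K+1)).image (E A r K h)) ⊆ genSum r h A := by
    intro x hx
    simp only [Finset.coe_image, Set.mem_image, Finset.mem_coe, Finset.mem_range] at hx
    obtain ⟨t, -, rfl⟩ := hx
    exact E_mem A r K h t k hr hk hK
  calc h*K+1 = ((Finset.range (h*K+1)).image (E A r K h)).card := hcard.symm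
  _ = (↑((Finset.range (h*K+1)).image (E A r K h)) : Set ℤ).ncard :=
      (Set.ncard_coe_finset _).symm
  _ ≤ (genSum r h A).ncard := Set.ncard_le_ncard hsub (genSum_finite r h A)

lemma S_lower (r m k : ℕ) (b : ℕ → ℕ) (hm : 1 ≤ m) (hmk : m ≤ k)
    (hb : ∀ i, b i ≤ r) (hsum : ∑ i ∈ Finset.range k, b i = m * r) :
    (r : ℤ) * ∑ i ∈ Finset.range m, (i : ℤ) ≤ ∑ i ∈ Finset.range k, (i : ℤ) * (b i : ℤ) := by
  have hsplit : ∀ f : ℕ → ℤ, ∑ i ∈ Finset.range k, f i =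
      ∑ i ∈ Finset.range m, f i + ∑ i ∈ Finset.Ico m k, f i := by
    intro f
    rw [Finset.range_eq_Ico, Finset.range_eq_Ico]
    exact (Finset.sum_Ico_consecutive f (Nat.zero_le m) hmk).symm
  have hBsum : ∑ i ∈ Finset.range m, (b i : ℤ) + ∑ i ∈ Finset.Ico m k, (b i : ℤ)
      = (m : ℤ) * r := by
    rw [← hsplit (fun i => (b i : ℤ)), ← Nat.cast_sum]
    rw [hsum]
    push_cast
    ring
  set B := ∑ i ∈ Finset.range m, (b i : ℤ) with hBdef
  have hBnn : 0 ≤ ∑ i ∈ Finset.Ico m k, (b i : ℤ) :=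
    Finset.sum_nonneg fun i _ => by positivity
  have h1 : ∑ i ∈ Finset.range m, ((i:ℤ)*r + ((m:ℤ)-1)*((b i:ℤ) - r))
      ≤ ∑ i ∈ Finset.range m, (i:ℤ)*(b i : ℤ) := by
    apply Finset.sum_le_sum
    intro i hi
    have hir : (b i : ℤ) - r ≤ 0 := by
      have := hb i
      have : (b i : ℤ) ≤ r := by exact_mod_cast this
      linarith
    have him : (i:ℤ) ≤ (m:ℤ)-1 := by
      have := Finset.mem_range.mp hi
      have : (i:ℤ) < m := by exact_mod_cast this
      linarith
    nlinarith [mul_le_mul_of_nonpos_right him hir]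
  have h2 : ∑ i ∈ Finset.Ico m k, (m:ℤ)*(b i : ℤ) ≤ ∑ i ∈ Finset.Ico m k, (i:ℤ)*(b i : ℤ) := by
    apply Finset.sum_le_sum
    intro i hi
    have : (m:ℤ) ≤ i := by exact_mod_cast (Finset.mem_Ico.mp hi).1
    exact mul_le_mul_of_nonneg_right this (by positivity)
  have c1 : ∑ i ∈ Finset.range m, ((i:ℤ)*r + ((m:ℤ)-1)*((b i:ℤ) - r))
      = (r:ℤ) * (∑ i ∈ Finset.range m, (i:ℤ)) + ((m:ℤ)-1)*(B - m*r) := by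
    rw [Finset.sum_add_distrib, ← Finset.sum_mul, ← Finset.mul_sum, Finset.sum_sub_distrib,
      Finset.sum_const, Finset.card_range]
    push_cast
    ring
  have c2 : ∑ i ∈ Finset.Ico m k, (m:ℤ)*(b i : ℤ)
      = (m:ℤ) * ((m:ℤ)*r - B) := by
    rw [← Finset.mul_sum]
    have : ∑ i ∈ Finset.Ico m k, (b i : ℤ) = (m:ℤ)*r - B := by linarith
    rw [this]
  rw [hsplit (fun i => (i:ℤ)*(b i:ℤ))]
  have hBle : B ≤ (m:ℤ)*r := by linarith
  calc (r : ℤ) * ∑ i ∈ Finset.range m, (i : ℤ)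
      ≤ (r:ℤ) * (∑ i ∈ Finset.range m, (i:ℤ)) + ((m:ℤ)-1)*(B - m*r) + (m:ℤ)*((m:ℤ)*r - B) := by
        nlinarith [hBle]
  _ ≤ _ := by
    rw [← c1, ← c2] at *
    exact add_le_add h1 h2


lemma AP_upper (k h m r : ℕ) (a d : ℤ) (hd : 0 < d)
    (hm : 1 ≤ m) (hr : 1 ≤ r) (hh : h = m*r) (hmk : m ≤ k) :
    (genSum r h ((Finset.range k).image (fun i : ℕ => a + d * (i:ℤ)))).ncard
      ≤ h * (k-m) + 1 := by
  classical
  set G : ℤ := ∑ i ∈ Finset.range m, (i:ℤ) with hGdef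
  set smin : ℤ := (r:ℤ) * G with hsmindef
  set smax : ℤ := ((k:ℤ)-1)*h - smin with hsmaxdef
  have hfinj : ∀ x ∈ Finset.range k, ∀ y ∈ Finset.range k,
      a + d * (x:ℤ) = a + d * (y:ℤ) → x = y := by
    intro i _ j _ hij
    have h1 : d * (i:ℤ) = d * j := by linarith
    have h2 : (i:ℤ) = j := mul_left_cancel₀ hd.ne' h1
    exact_mod_cast h2
  have hsub : genSum r h ((Finset.range k).image (fun i : ℕ => a + d * (i:ℤ)))
      ⊆ ↑((Finset.Icc smin smax).image (fun s => (h:ℤ)*a + d*s)) := by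
    rintro x ⟨c, hc1, hc2, hc3, hc4⟩
    rw [Finset.sum_image hfinj] at hc3 hc4
    set b : ℕ → ℕ := fun i => c (a + d*(i:ℤ)) with hbdef
    have hS1 : smin ≤ ∑ i ∈ Finset.range k, (i:ℤ)*(b i) :=
      S_lower r m k b hm hmk (fun i => hc1 _) (by rw [← hh]; exact hc3)
    have hrefl : ∑ i ∈ Finset.range k, b (k-1-i) = m*r := by
      rw [Finset.sum_range_reflect]; rw [← hh]; exact hc3
    have hS2 : smin ≤ ∑ i ∈ Finset.range k, (i:ℤ)*(b (k-1-i)) :=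
      S_lower r m k _ hm hmk (fun i => hc1 _) hrefl
    have hflip : ∑ i ∈ Finset.range k, (i:ℤ)*(b (k-1-i))
        = ∑ j ∈ Finset.range k, ((k-1-j:ℕ):ℤ)*(b j) := by
      rw [← Finset.sum_range_reflect (fun j => ((k-1-j:ℕ):ℤ)*(b j)) k]
      apply Finset.sum_congr rfl
      intro j hj
      have hj' := Finset.mem_range.mp hj
      have he : k-1-(k-1-j) = j := by omega
      rw [he]
    have hsumb : ∑ j ∈ Finset.range k, ((b j : ℕ):ℤ) = (h:ℤ) := by
      rw [← Nat.cast_sum, hc3]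
    have htot : ∑ i ∈ Finset.range k, (i:ℤ)*(b i)
        + ∑ j ∈ Finset.range k, ((k-1-j:ℕ):ℤ)*(b j) = ((k:ℤ)-1)*h := by
      rw [← Finset.sum_add_distrib]
      have hcg : ∀ j ∈ Finset.range k,
          (j:ℤ)*(b j) + ((k-1-j:ℕ):ℤ)*(b j) = ((k:ℤ)-1)*(b j) := by
        intro j hj
        have hj' := Finset.mem_range.mp hj
        have he : ((k-1-j:ℕ):ℤ) = (k:ℤ)-1-j := by omega
        rw [he]; ring
      rw [Finset.sum_congr rfl hcg, ← Finset.mul_sum, hsumb]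
    have hx : x = (h:ℤ)*a + d * (∑ i ∈ Finset.range k, (i:ℤ)*(b i)) := by
      rw [← hc4]
      simp only [nsmul_eq_mul]
      calc ∑ i ∈ Finset.range k, (b i : ℤ) * (a + d*(i:ℤ))
          = ∑ i ∈ Finset.range k, ((b i:ℤ)*a + d*((i:ℤ)*(b i))) := by
            apply Finset.sum_congr rfl; intro i _; ring
        _ = (∑ i ∈ Finset.range k, (b i:ℤ))*a
            + d*(∑ i ∈ Finset.range k, (i:ℤ)*(b i)) := by
            rw [Finset.sum_add_distrib, ← Finset.sum_mul, ← Finset.mul_sum]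
        _ = (h:ℤ)*a + d*(∑ i ∈ Finset.range k, (i:ℤ)*(b i)) := by rw [hsumb]
    refine Finset.mem_coe.mpr (Finset.mem_image.mpr
      ⟨∑ i ∈ Finset.range k, (i:ℤ)*(b i),
        Finset.mem_Icc.mpr ⟨hS1, by linarith⟩, hx.symm⟩)
  have h2G : 2 * G = (m:ℤ)*((m:ℤ)-1) := by
    have h0 := Finset.sum_range_id_mul_two m
    have h1 : ((∑ i ∈ Finset.range m, i : ℕ):ℤ) * 2 = (m:ℤ)*(((m-1:ℕ)):ℤ) := by
      exact_mod_cast h0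
    rw [Nat.cast_sum] at h1
    have hm1 : ((m-1:ℕ):ℤ) = (m:ℤ)-1 := by omega
    rw [hm1] at h1
    rw [hGdef]
    linarith
  have hIcc : (Finset.Icc smin smax).card = h*(k-m)+1 := by
    rw [Int.card_Icc]
    have hval : smax + 1 - smin = ((h*(k-m)+1 : ℕ):ℤ) := by
      have hkm : ((k-m:ℕ):ℤ) = (k:ℤ)-m := by omega
      rw [hsmaxdef, hsmindef]
      push_cast [hkm]
      subst hh
      push_cast
      nlinarith [h2G]
    rw [hval, Int.toNat_natCast]
  calc (genSum r h ((Finset.range k).image (fun i : ℕ => a + d * (i:ℤ)))).ncard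
      ≤ (↑((Finset.Icc smin smax).image (fun s => (h:ℤ)*a + d*s)) : Set ℤ).ncard :=
        Set.ncard_le_ncard hsub ((Finset.Icc smin smax).image _).finite_toSet
    _ = ((Finset.Icc smin smax).image (fun s => (h:ℤ)*a + d*s)).card :=
        Set.ncard_coe_finset _
    _ ≤ (Finset.Icc smin smax).card := Finset.card_image_le
    _ = h*(k-m)+1 := hIcc


end Aux9

theorem stmt9 (A : Finset ℤ) (k h m r : ℕ)
    (hA : A.Nonempty) (hk : A.card = k)
    (hm : 1 ≤ m) (hr : 1 ≤ r) (hh : h = m * r) (h2 : h ≤ r * k) :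
    ((genSum r h A).ncard : ℤ) ≥ (h : ℤ) * k - (r : ℤ) * (m : ℤ) ^ 2 + 1 ∧
    (∀ a d : ℤ, 0 < d → A = (Finset.range k).image (fun i : ℕ => a + d * (i : ℤ)) →
      ((genSum r h A).ncard : ℤ) = (h : ℤ) * k - (r : ℤ) * (m : ℤ) ^ 2 + 1) := by
  have hmk : m ≤ k := by
    rw [hh, mul_comm r k] at h2
    exact Nat.le_of_mul_le_mul_right h2 hr
  have hlow := Aux9.lower_card A k h m r hk hm hr hh hmk
  have hcast : ((h*(k-m)+1 : ℕ):ℤ) = (h:ℤ)*k - (r:ℤ)*(m:ℤ)^2 + 1 := by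
    have hkm : ((k-m:ℕ):ℤ) = (k:ℤ)-m := by omega
    push_cast [hkm]
    subst hh
    push_cast
    ring
  have hlow' : ((h*(k-m)+1 : ℕ):ℤ) ≤ ((genSum r h A).ncard : ℤ) := by exact_mod_cast hlow
  constructor
  · rw [← hcast]; exact hlow'
  · intro a d hd hAeq
    have hup := Aux9.AP_upper k h m r a d hd hm hr hh hmk
    rw [← hAeq] at hup
    have hup' : ((genSum r h A).ncard:ℤ) ≤ ((h*(k-m)+1:ℕ):ℤ) := by exact_mod_cast hup
    rw [← hcast]
    exact le_antisymm hup' hlow'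
end

section
/- Let h = m·r with r ≥ 2, m ≥ 2, and let A be a set of k ≥ 5 integers with m ≤ k − 1 and h ≤ r·k − 2. If |h^(r)A| = h·(k − m) + 1, then the restricted sumset m^∧A is an arithmetic progression. -/
open Finset Pointwise

set_option linter.unusedSectionVars false
set_option linter.unusedVariables false

namespace Stmt10

def rsum (m : ℕ) (A : Finset ℤ) : Finset ℤ := (A.powersetCard m).image fun s => s.sum id

lemma genSum_one (m : ℕ) (A : Finset ℤ) : genSum 1 m A = ↑(rsum m A) := by
  ext x
  constructor
  · rintro ⟨c, hc1, hcA, hsum, rfl⟩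
    have hca : ∀ a ∈ A, c a = if c a = 1 then 1 else 0 := by
      intro a _; have := hc1 a; split <;> omega
    refine mem_coe.2 (mem_image.2 ⟨A.filter (fun a => c a = 1), mem_powersetCard.2 ⟨filter_subset _ _, ?_⟩, ?_⟩)
    · rw [card_filter, ← hsum]
      exact (Finset.sum_congr rfl fun a ha => (hca a ha).symm)
    · rw [Finset.sum_filter]
      refine (Finset.sum_congr rfl fun a ha => ?_).symm
      have := hc1 a
      rcases Nat.le_one_iff_eq_zero_or_eq_one.1 this with h | h <;> simp [h, id]
  · intro hx
    obtain ⟨S, hS, rfl⟩ := mem_image.1 (mem_coe.1 hx)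
    obtain ⟨hSA, hScard⟩ := mem_powersetCard.1 hS
    refine ⟨fun a => if a ∈ S then 1 else 0, ?_, ?_, ?_, ?_⟩
    · intro a; dsimp only; split <;> omega
    · intro a ha; by_cases h : a ∈ S
      · exact hSA h
      · simp [h] at ha
    · dsimp only
      rw [Finset.sum_ite_mem, inter_eq_right.2 hSA, ← hScard, Finset.card_eq_sum_ones]
    · dsimp only
      rw [show S.sum id = ∑ a ∈ A, (if a ∈ S then a else 0) by
        rw [Finset.sum_ite_mem, inter_eq_right.2 hSA]; rfl]
      refine Finset.sum_congr rfl fun a _ => ?_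
      split <;> simp


def itS : ℕ → Finset ℤ → Finset ℤ
  | 0, _ => {0}
  | (r+1), B => itS r B + B

lemma ite_count {S A : Finset ℤ} (hSA : S ⊆ A) :
    ∑ a ∈ A, (if a ∈ S then 1 else 0) = S.card := by
  rw [Finset.sum_ite_mem, inter_eq_right.2 hSA, Finset.card_eq_sum_ones]

lemma ite_smul_sum {S A : Finset ℤ} (hSA : S ⊆ A) :
    ∑ a ∈ A, (if a ∈ S then 1 else 0 : ℕ) • a = S.sum id := by
  have : ∑ a ∈ A, (if a ∈ S then 1 else 0 : ℕ) • a = ∑ a ∈ A, (if a ∈ S then a else 0) :=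
    Finset.sum_congr rfl fun a _ => by split <;> simp
  rw [this, Finset.sum_ite_mem, inter_eq_right.2 hSA]; rfl

lemma step (A : Finset ℤ) (m r : ℕ) (c : ℤ → ℕ)
    (hc1 : ∀ a, c a ≤ r + 1) (hcA : ∀ a, c a ≠ 0 → a ∈ A)
    (hsum : ∑ a ∈ A, c a = m * (r+1)) :
    ∃ T, T ⊆ A ∧ T.card = m ∧ (∀ a ∈ T, 1 ≤ c a) ∧
      (∀ a, c a - (if a ∈ T then 1 else 0) ≤ r) ∧
      (∑ a ∈ A, (c a - (if a ∈ T then 1 else 0))) = m * r := by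
  classical
  set U := A.filter (fun a => c a ≠ 0) with hU
  set M := A.filter (fun a => c a = r + 1) with hM
  have hMU : M ⊆ U := by
    intro a ha
    simp only [hM, mem_filter] at ha
    simp only [hU, mem_filter]
    exact ⟨ha.1, by omega⟩
  have hsumU : ∑ a ∈ U, c a = m * (r+1) := by
    rw [← hsum]
    exact Finset.sum_filter_of_ne (fun a _ h => h)
  have hMcard : M.card ≤ m := by
    have h1 : M.card * (r+1) ≤ m * (r+1) := by
      calc M.card * (r+1) = ∑ _a ∈ M, (r+1) := by rw [Finset.sum_const, smul_eq_mul]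
        _ = ∑ a ∈ M, c a := by
            refine Finset.sum_congr rfl fun a ha => ?_
            simp only [hM, mem_filter] at ha; omega
        _ ≤ ∑ a ∈ U, c a := Finset.sum_le_sum_of_subset hMU
        _ = m * (r+1) := hsumU
    exact Nat.le_of_mul_le_mul_right h1 (by omega)
  have hUcard : m ≤ U.card := by
    have h1 : m * (r+1) ≤ U.card * (r+1) := by
      calc m * (r+1) = ∑ a ∈ U, c a := hsumU.symm
        _ ≤ ∑ _a ∈ U, (r+1) := Finset.sum_le_sum fun a _ => hc1 a
        _ = U.card * (r+1) := by rw [Finset.sum_const, smul_eq_mul]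
    exact Nat.le_of_mul_le_mul_right h1 (by omega)
  obtain ⟨T, hMT, hTU, hTcard⟩ := Finset.exists_subsuperset_card_eq hMU hMcard hUcard
  have hTA : T ⊆ A := hTU.trans (filter_subset _ _)
  have hT1 : ∀ a ∈ T, 1 ≤ c a := by
    intro a ha
    have := hTU ha
    simp only [hU, mem_filter] at this; omega
  refine ⟨T, hTA, hTcard, hT1, ?_, ?_⟩
  · intro a
    by_cases hT : a ∈ T
    · simp only [hT, if_pos]; have := hc1 a; omega
    · simp only [hT, if_neg, not_false_iff]
      by_cases hA' : a ∈ A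
      · have : c a ≠ r + 1 := by
          intro h
          exact hT (hMT (by simp only [hM, mem_filter]; exact ⟨hA', h⟩))
        have := hc1 a; omega
      · have : c a = 0 := by
          by_contra h
          exact hA' (hcA a h)
        omega
  · have hle : ∀ a ∈ A, (if a ∈ T then 1 else 0) ≤ c a := by
      intro a _; split
      · exact hT1 a (by assumption)
      · omega
    rw [Finset.sum_tsub_distrib A hle, hsum, ite_count hTA, hTcard]
    ring_nf
    omega

lemma genSum_eq_itS (m : ℕ) (A : Finset ℤ) (r : ℕ) :
    genSum r (m*r) A = ↑(itS r (rsum m A)) := by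
  induction r with
  | zero =>
    ext x
    constructor
    · rintro ⟨c, hc1, hcA, hsum, rfl⟩
      have hc0 : ∀ a, c a = 0 := fun a => Nat.le_zero.1 (hc1 a)
      have hz : ∑ a ∈ A, c a • a = 0 :=
        Finset.sum_eq_zero fun a _ => by rw [hc0 a, zero_smul]
      rw [hz]
      simp [itS]
    · intro hx
      have hx0 : x = 0 := by simpa [itS] using hx
      subst hx0
      exact ⟨fun _ => 0, fun a => le_refl 0, fun a h => absurd rfl h, by simp, by simp⟩
  | succ r ih =>
    have hit : itS (r+1) (rsum m A) = itS r (rsum m A) + rsum m A := rfl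
    ext x
    constructor
    · rintro ⟨c, hc1, hcA, hsum, rfl⟩
      obtain ⟨T, hTA, hTcard, hT1, hbd, hsum'⟩ := step A m r c hc1 hcA hsum
      have hx' : (∑ a ∈ A, (c a - (if a ∈ T then 1 else 0)) • a) ∈ genSum r (m*r) A := by
        refine ⟨fun a => c a - (if a ∈ T then 1 else 0), hbd, fun a h => ?_, hsum', rfl⟩
        refine hcA a ?_
        intro h0
        apply h
        simp [h0]
      rw [ih] at hx'
      have hTmem : T.sum id ∈ rsum m A :=
        mem_image.2 ⟨T, mem_powersetCard.2 ⟨hTA, hTcard⟩, rfl⟩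
      have hsplit : ∑ a ∈ A, c a • a
          = (∑ a ∈ A, (c a - (if a ∈ T then 1 else 0)) • a) + T.sum id := by
        rw [← ite_smul_sum hTA, ← Finset.sum_add_distrib]
        refine Finset.sum_congr rfl fun a ha => ?_
        rw [← add_nsmul]
        congr 1
        by_cases h : a ∈ T
        · have := hT1 a h; simp only [h, if_pos]; omega
        · simp [h]
      rw [hsplit, hit]
      exact Finset.mem_coe.2 (Finset.add_mem_add (Finset.mem_coe.1 hx') hTmem)
    · intro hx
      rw [hit] at hx
      obtain ⟨y, hy, z, hz, rfl⟩ := Finset.mem_add.1 (Finset.mem_coe.1 hx)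
      have hy' : y ∈ genSum r (m*r) A := by rw [ih]; exact Finset.mem_coe.2 hy
      obtain ⟨c, hc1, hcA, hsum, rfl⟩ := hy'
      obtain ⟨S, hS, rfl⟩ := mem_image.1 hz
      obtain ⟨hSA, hScard⟩ := mem_powersetCard.1 hS
      refine ⟨fun a => c a + (if a ∈ S then 1 else 0), fun a => ?_, fun a h => ?_, ?_, ?_⟩
      · have := hc1 a; dsimp only; split <;> omega
      · dsimp only at h
        by_cases hs : a ∈ S
        · exact hSA hs
        · simp only [hs, if_neg, not_false_iff, add_zero] at h
          exact hcA a h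
      · dsimp only
        rw [Finset.sum_add_distrib, hsum, ite_count hSA, hScard]
        ring
      · dsimp only
        calc ∑ a ∈ A, (c a + if a ∈ S then 1 else 0) • a
            = ∑ a ∈ A, (c a • a + (if a ∈ S then 1 else 0) • a) :=
              Finset.sum_congr rfl fun a _ => add_nsmul a _ _
          _ = (∑ a ∈ A, c a • a) + ∑ a ∈ A, (if a ∈ S then 1 else 0) • a :=
              Finset.sum_add_distrib
          _ = (∑ a ∈ A, c a • a) + S.sum id := by rw [ite_smul_sum hSA]

lemma itS_nonempty (B : Finset ℤ) (hB : B.Nonempty) : ∀ r, (itS r B).Nonempty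
  | 0 => ⟨0, mem_singleton_self 0⟩
  | (r+1) => (itS_nonempty B hB r).add hB

lemma card_itS_ge (B : Finset ℤ) (hB : B.Nonempty) : ∀ r, r * B.card + 1 ≤ (itS r B).card + r
  | 0 => by simp [itS]
  | (r+1) => by
    have h1 := card_itS_ge B hB r
    have h2 : (itS r B).card + B.card - 1 ≤ (itS (r+1) B).card :=
      cauchy_davenport_add_of_linearOrder_isCancelAdd (itS_nonempty B hB r) hB
    have h3 : 1 ≤ (itS r B).card := Finset.card_pos.2 (itS_nonempty B hB r)
    have h4 : 1 ≤ B.card := Finset.card_pos.2 hB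
    have : (r+1) * B.card = r * B.card + B.card := by ring
    omega

lemma chain_lt {F : ℕ → ℤ} {N : ℕ} (h : ∀ j, j + 1 < N → F j < F (j+1)) :
    ∀ b a, b < N → a < b → F a < F b := by
  intro b
  induction b with
  | zero => intro a _ _; omega
  | succ b ih =>
    intro a hbN hab
    rcases Nat.lt_succ_iff_lt_or_eq.1 hab with h' | h'
    · exact (ih a (by omega) h').trans (h b hbN)
    · subst h'; exact h a hbN

section staircase

variable (k m : ℕ) (b : ℕ → ℤ)

/-- the staircase index set -/
def V (q s : ℕ) : Finset ℕ := (range (m-1-q) ∪ {m-1-q+s}) ∪ Ico (k-q) k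

/-- the staircase sum -/
def SQ (q s : ℕ) : ℤ := ∑ i ∈ V k m q s, b i

variable {k m}

lemma V_subset (hmk : m < k) {q s : ℕ} (hq : q < m) (hs : s ≤ k-m) : V k m q s ⊆ range k := by
  intro i hi
  simp only [V, mem_union, mem_range, mem_singleton, mem_Ico] at hi ⊢
  omega

lemma V_card (hmk : m < k) {q s : ℕ} (hq : q < m) (hs : s ≤ k-m) : (V k m q s).card = m := by
  have hd1 : Disjoint (range (m-1-q) ∪ {m-1-q+s}) (Ico (k-q) k) := by
    rw [Finset.disjoint_left]
    intro i hi hi'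
    simp only [mem_union, mem_range, mem_singleton, mem_Ico] at hi hi'
    omega
  have hd2 : Disjoint (range (m-1-q)) ({m-1-q+s} : Finset ℕ) := by
    rw [Finset.disjoint_left]
    intro i hi hi'
    simp only [mem_range] at hi
    simp only [mem_singleton] at hi'
    omega
  rw [V, card_union_of_disjoint hd1, card_union_of_disjoint hd2, card_range,
    card_singleton, Nat.card_Ico]
  omega

lemma SQ_eq (hmk : m < k) {q s : ℕ} (hq : q < m) (hs : s ≤ k-m) :
    SQ k m b q s = (∑ i ∈ range (m-1-q), b i) + b (m-1-q+s) + ∑ i ∈ Ico (k-q) k, b i := by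
  have hd1 : Disjoint (range (m-1-q) ∪ {m-1-q+s}) (Ico (k-q) k) := by
    rw [Finset.disjoint_left]
    intro i hi hi'
    simp only [mem_union, mem_range, mem_singleton, mem_Ico] at hi hi'
    omega
  have hd2 : Disjoint (range (m-1-q)) ({m-1-q+s} : Finset ℕ) := by
    rw [Finset.disjoint_left]
    intro i hi hi'
    simp only [mem_range] at hi
    simp only [mem_singleton] at hi'
    omega
  rw [SQ, V, Finset.sum_union hd1, Finset.sum_union hd2, Finset.sum_singleton]

lemma SQ_lt (hmk : m < k) (hb : ∀ i j, i < j → j < k → b i < b j) {q s s' : ℕ}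
    (hq : q < m) (hss' : s < s') (hs' : s' ≤ k-m) : SQ k m b q s < SQ k m b q s' := by
  rw [SQ_eq b hmk hq (by omega), SQ_eq b hmk hq hs']
  have : b (m-1-q+s) < b (m-1-q+s') := hb _ _ (by omega) (by omega)
  omega

lemma SQ_glue1 (hmk : m < k) (hm : 1 ≤ m) {q : ℕ} (hq : q + 1 < m) : SQ k m b q (k-m) = SQ k m b (q+1) 0 := by
  rw [SQ_eq b hmk (by omega) (le_refl _), SQ_eq b hmk hq (by omega)]
  have e1 : m-1-q = (m-1-(q+1)) + 1 := by omega
  rw [e1, Finset.sum_range_succ]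
  have e2 : Ico (k-(q+1)) k = insert (k-(q+1)) (Ico (k-q) k) := by
    ext i
    simp only [mem_Ico, mem_insert]
    omega
  rw [e2, Finset.sum_insert (by simp only [mem_Ico]; omega)]
  have e3 : m-1-(q+1)+1+(k-m) = k-(q+1) := by omega
  have e4 : m-1-(q+1)+0 = m-1-(q+1) := by omega
  rw [e3, e4]
  ring

lemma SQ_glue2 (hmk : m < k) (hm : 1 ≤ m) : SQ k m b (m-1) (k-m) = ∑ i ∈ Ico (k-m) k, b i := by
  rw [SQ_eq b hmk (by omega) (le_refl _)]
  have e1 : m-1-(m-1) = 0 := by omega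
  have e2 : m-1-(m-1)+(k-m) = k-m := by omega
  have e3 : Ico (k-m) k = insert (k-m) (Ico (k-(m-1)) k) := by
    ext i
    simp only [mem_Ico, mem_insert]
    omega
  rw [e1, Nat.zero_add, e3, Finset.sum_insert (by simp only [mem_Ico]; omega), Finset.sum_range_zero]
  ring

end staircase

lemma mem_rsum_of (A : Finset ℤ) (k m : ℕ) (hA : A.card = k) (b : ℕ → ℤ)
    (hb : ∀ i j, i < j → j < k → b i < b j) (hbA : ∀ i, i < k → b i ∈ A)
    (W : Finset ℕ) (hW : W ⊆ range k) (hcard : W.card = m) :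
    (∑ i ∈ W, b i) ∈ rsum m A := by
  have hinj : Set.InjOn b ↑W := by
    intro i hi j hj hij
    by_contra hne
    rcases Nat.lt_or_ge i j with h | h
    · exact absurd hij (ne_of_lt (hb i j h (mem_range.1 (hW hj))))
    · have : j < i := by omega
      exact absurd hij.symm (ne_of_lt (hb j i this (mem_range.1 (hW hi))))
  refine mem_image.2 ⟨W.image b, mem_powersetCard.2 ⟨?_, ?_⟩, ?_⟩
  · intro x hx
    obtain ⟨i, hi, rfl⟩ := mem_image.1 hx
    exact hbA i (mem_range.1 (hW hi))
  · rw [Finset.card_image_of_injOn hinj, hcard]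
  · rw [Finset.sum_image (fun i hi j hj => hinj (mem_coe.2 hi) (mem_coe.2 hj))]
    rfl

lemma card_rsum_ge (A : Finset ℤ) (k m : ℕ) (hA : A.card = k) (hm : 1 ≤ m) (hmk : m < k) :
    m * (k - m) + 1 ≤ (rsum m A).card := by
  classical
  set e := A.orderEmbOfFin hA with he
  set b : ℕ → ℤ := fun i => if h : i < k then e ⟨i, h⟩ else 0 with hb
  have hbmono : ∀ i j, i < j → j < k → b i < b j := by
    intro i j hij hjk
    have hik : i < k := by omega
    simp only [hb, dif_pos hik, dif_pos hjk]
    exact e.strictMono (by exact hij)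
  have hbA : ∀ i, i < k → b i ∈ A := by
    intro i hik
    simp only [hb, dif_pos hik]
    exact A.orderEmbOfFin_mem hA _
  have hkm : 0 < k - m := by omega
  set N := m * (k - m) + 1 with hN
  set F : ℕ → ℤ := fun j =>
    if j < m*(k-m) then SQ k m b (j/(k-m)) (j%(k-m)) else ∑ i ∈ Ico (k-m) k, b i with hF
  -- membership
  have hFmem : ∀ j, j < N → F j ∈ rsum m A := by
    intro j hj
    by_cases hcase : j < m*(k-m)
    · have hq : j/(k-m) < m := (Nat.div_lt_iff_lt_mul hkm).2 hcase
      have hs : j%(k-m) < k-m := Nat.mod_lt _ hkm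
      simp only [hF, if_pos hcase, SQ]
      exact mem_rsum_of A k m hA b hbmono hbA _ (V_subset hmk hq (by omega))
        (V_card hmk hq (by omega))
    · simp only [hF, if_neg hcase]
      refine mem_rsum_of A k m hA b hbmono hbA _ ?_ ?_
      · intro i hi; simp only [mem_Ico] at hi; simp only [mem_range]; omega
      · rw [Nat.card_Ico]; omega
  -- strict monotonicity
  have hstep : ∀ j, j + 1 < N → F j < F (j+1) := by
    intro j hj1
    have hcase : j < m*(k-m) := by omega
    have hq : j/(k-m) < m := (Nat.div_lt_iff_lt_mul hkm).2 hcase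
    have hs : j%(k-m) < k-m := Nat.mod_lt _ hkm
    have hdm := Nat.div_add_mod j (k-m)
    set q := j/(k-m) with hqdef
    set s := j%(k-m) with hsdef
    by_cases hA1 : j + 1 < m*(k-m)
    · by_cases hs1 : s + 1 < k - m
      · have hj1e : j+1 = (k-m)*q + (s+1) := by omega
        have hq' : (j+1)/(k-m) = q := by
          rw [hj1e, Nat.mul_add_div hkm, Nat.div_eq_of_lt hs1, Nat.add_zero]
        have hs' : (j+1)%(k-m) = s+1 := by
          rw [hj1e, Nat.mul_add_mod, Nat.mod_eq_of_lt hs1]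
        simp only [hF, if_pos hcase, if_pos hA1, hq', hs']
        exact SQ_lt b hmk hbmono hq (by omega) (by omega)
      · have hs1e : s + 1 = k - m := by omega
        have hj1e : j+1 = (k-m)*(q+1) := by
          have hexp : (k-m)*(q+1) = (k-m)*q + (k-m) := by ring
          omega
        have hq' : (j+1)/(k-m) = q+1 := by
          rw [hj1e, Nat.mul_div_cancel_left _ hkm]
        have hs' : (j+1)%(k-m) = 0 := by
          rw [hj1e, Nat.mul_mod_right]
        have hq1m : q + 1 < m := by
          by_contra hcon
          have : m ≤ q + 1 := by omega
          have : m * (k-m) ≤ (k-m)*(q+1) := by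
            calc m * (k-m) = (k-m)*m := by ring
              _ ≤ (k-m)*(q+1) := Nat.mul_le_mul_left _ this
          omega
        simp only [hF, if_pos hcase, if_pos hA1, hq', hs']
        rw [← SQ_glue1 b hmk hm hq1m]
        exact SQ_lt b hmk hbmono hq (by omega) (le_refl _)
    · -- j + 1 = m * (k-m)
      have hj1e : j + 1 = m * (k-m) := by omega
      have hqe : q = m - 1 := by
        have : j = (k-m)*(m-1) + (k-m-1) := by
          have h1' : (m-1)*(k-m) = m*(k-m) - (k-m) := Nat.sub_one_mul _ _
          have h2' : (k-m) ≤ m*(k-m) := Nat.le_mul_of_pos_left (k-m) (by omega)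
          have hexp : m*(k-m) = (k-m)*(m-1) + (k-m) := by
            rw [mul_comm (k-m) (m-1)]
            omega
          omega
        rw [hqdef, this, Nat.mul_add_div hkm, Nat.div_eq_of_lt (by omega)]
        omega
      have hse : s = k-m-1 := by
        have hje : j = (k-m)*(m-1) + (k-m-1) := by
          have h1' : (m-1)*(k-m) = m*(k-m) - (k-m) := Nat.sub_one_mul _ _
          have h2' : (k-m) ≤ m*(k-m) := Nat.le_mul_of_pos_left (k-m) (by omega)
          have hexp : m*(k-m) = (k-m)*(m-1) + (k-m) := by
            rw [mul_comm (k-m) (m-1)]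
            omega
          omega
        rw [hsdef, hje, Nat.mul_add_mod, Nat.mod_eq_of_lt (by omega)]
      simp only [hF, if_pos hcase, if_neg (by omega : ¬ (j+1 < m*(k-m)))]
      rw [← SQ_glue2 b hmk hm, ← hqdef, ← hsdef, hqe, hse]
      exact SQ_lt b hmk hbmono (by omega) (by omega) (le_refl _)
  -- conclude
  have hinj : Set.InjOn F ↑(range N) := by
    intro i hi j hj hij
    by_contra hne
    rcases Nat.lt_or_ge i j with h | h
    · exact absurd hij (ne_of_lt (chain_lt hstep j i (Finset.mem_coe.1 hj |> mem_range.1) h))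
    · have : j < i := by omega
      exact absurd hij.symm (ne_of_lt (chain_lt hstep i j (Finset.mem_coe.1 hi |> mem_range.1) this))
  have := Finset.card_le_card_of_injOn F (fun j hj => hFmem j (mem_range.1 hj)) hinj
  rwa [card_range] at this

lemma freiman (B : Finset ℤ) (n : ℕ) (hn : 2 ≤ n) (hB : B.card = n)
    (hBB : (B + B).card = 2*n - 1) : IsAPSet ↑B := by
  classical
  set e := B.orderEmbOfFin hB with he
  set c : ℕ → ℤ := fun i => if h : i < n then e ⟨i, h⟩ else 0 with hc
  have hcmono : ∀ i j, i < j → j < n → c i < c j := by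
    intro i j hij hjn
    have hin : i < n := by omega
    simp only [hc, dif_pos hin, dif_pos hjn]
    exact e.strictMono (by exact hij)
  have hcB : ∀ i, i < n → c i ∈ B := by
    intro i hin
    simp only [hc, dif_pos hin]
    exact B.orderEmbOfFin_mem hB _
  set Ff : ℕ → ℤ := fun t => if t < n then c 0 + c t else c (t - n + 1) + c (n-1) with hFf
  set Gg : ℕ → ℤ := fun t => if t < 2 then c 0 + c t
    else if t ≤ n then c 1 + c (t-1) else c (t-n+1) + c (n-1) with hGg
  have hFfstep : ∀ t, t + 1 < 2*n-1 → Ff t < Ff (t+1) := by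
    intro t ht
    by_cases h1 : t + 1 < n
    · simp only [hFf, if_pos h1, if_pos (show t < n by omega)]
      exact add_lt_add_right (hcmono t (t+1) (by omega) h1) _
    · by_cases h2 : t + 1 = n
      · simp only [hFf, if_pos (show t < n by omega), if_neg (show ¬ t+1 < n by omega)]
        have he1 : t + 1 - n + 1 = 1 := by omega
        have he2 : t = n - 1 := by omega
        rw [he1, he2]
        exact add_lt_add_left (hcmono 0 1 (by omega) (by omega)) _
      · simp only [hFf, if_neg (show ¬ t < n by omega), if_neg (show ¬ t+1 < n by omega)]
        refine add_lt_add_left (hcmono (t-n+1) (t+1-n+1) (by omega) (by omega)) _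
  have hGgstep : ∀ t, t + 1 < 2*n-1 → Gg t < Gg (t+1) := by
    intro t ht
    by_cases h1 : t + 1 < 2
    · simp only [hGg, if_pos h1, if_pos (show t < 2 by omega)]
      exact add_lt_add_right (hcmono t (t+1) (by omega) (by omega)) _
    · by_cases h2 : t + 1 = 2
      · simp only [hGg, if_pos (show t < 2 by omega), if_neg (show ¬ t+1 < 2 by omega),
          if_pos (show t+1 ≤ n by omega)]
        have he2 : t + 1 - 1 = t := by omega
        have he1 : t = 1 := by omega
        rw [he2, he1]
        exact add_lt_add_left (hcmono 0 1 (by omega) (by omega)) _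
      · by_cases h3 : t + 1 ≤ n
        · simp only [hGg, if_neg (show ¬ t < 2 by omega), if_neg (show ¬ t+1 < 2 by omega),
            if_pos (show t ≤ n by omega), if_pos h3]
          refine add_lt_add_right (hcmono (t-1) (t+1-1) (by omega) (by omega)) _
        · by_cases h4 : t + 1 = n + 1
          · simp only [hGg, if_neg (show ¬ t < 2 by omega), if_neg (show ¬ t+1 < 2 by omega),
              if_pos (show t ≤ n by omega), if_neg (show ¬ t+1 ≤ n by omega)]
            have he1 : t - 1 = n - 1 := by omega
            have he2 : t + 1 - n + 1 = 2 := by omega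
            rw [he1, he2]
            exact add_lt_add_left (hcmono 1 2 (by omega) (by omega)) _
          · simp only [hGg, if_neg (show ¬ t < 2 by omega), if_neg (show ¬ t+1 < 2 by omega),
              if_neg (show ¬ t ≤ n by omega), if_neg (show ¬ t+1 ≤ n by omega)]
            refine add_lt_add_left (hcmono (t-n+1) (t+1-n+1) (by omega) (by omega)) _
  set f : Fin (2*n-1) → ℤ := fun t => Ff t.1 with hf
  set g : Fin (2*n-1) → ℤ := fun t => Gg t.1 with hg
  have hfmono : StrictMono f := by
    intro s t hst
    exact chain_lt hFfstep t.1 s.1 t.isLt hst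
  have hgmono : StrictMono g := by
    intro s t hst
    exact chain_lt hGgstep t.1 s.1 t.isLt hst
  have hfmem : ∀ t, f t ∈ B + B := by
    intro t
    have ht := t.isLt
    simp only [hf, hFf]
    split
    · exact Finset.add_mem_add (hcB 0 (by omega)) (hcB t.1 (by omega))
    · exact Finset.add_mem_add (hcB _ (by omega)) (hcB _ (by omega))
  have hgmem : ∀ t, g t ∈ B + B := by
    intro t
    have ht := t.isLt
    simp only [hg, hGg]
    split
    · exact Finset.add_mem_add (hcB 0 (by omega)) (hcB t.1 (by omega))
    · split
      · exact Finset.add_mem_add (hcB 1 (by omega)) (hcB _ (by omega))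
      · exact Finset.add_mem_add (hcB _ (by omega)) (hcB _ (by omega))
  have hfg : f = g := by
    rw [Finset.orderEmbOfFin_unique hBB hfmem hfmono,
      Finset.orderEmbOfFin_unique hBB hgmem hgmono]
  have hgap : ∀ i, 2 ≤ i → i ≤ n - 1 → c 0 + c i = c 1 + c (i-1) := by
    intro i h2i hin
    have hi : i < 2*n-1 := by omega
    have := congrFun hfg ⟨i, hi⟩
    simp only [hf, hg, hFf, hGg] at this
    rw [if_pos (show i < n by omega), if_neg (show ¬ i < 2 by omega),
      if_pos (show i ≤ n by omega)] at this
    exact this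
  set d : ℤ := c 1 - c 0 with hd
  have hdpos : 0 < d := by
    have := hcmono 0 1 (by omega) (by omega)
    omega
  have hform : ∀ i, i < n → c i = c 0 + d * i := by
    intro i
    induction i with
    | zero => intro _; simp
    | succ i ih =>
      intro hin
      by_cases hi0 : i = 0
      · subst hi0
        simp only [Nat.cast_one, mul_one, hd]
        ring
      · have hgi := hgap (i+1) (by omega) (by omega)
        have hci := ih (by omega)
        have : (i+1) - 1 = i := by omega
        rw [this] at hgi
        have : c (i+1) = c i + d := by omega
        rw [this, hci]
        push_cast
        ring
  refine ⟨c 0, d, n, hdpos, ?_⟩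
  ext x
  simp only [Finset.coe_image, Finset.coe_range, Set.mem_image, Set.mem_Iio, Finset.mem_coe]
  constructor
  · intro hx
    have : x ∈ Set.range e := by rw [he, Finset.range_orderEmbOfFin]; exact hx
    obtain ⟨i, rfl⟩ := this
    refine ⟨i.1, i.isLt, ?_⟩
    rw [← hform i.1 i.isLt]
    simp only [hc, dif_pos i.isLt]
  · rintro ⟨i, hin, rfl⟩
    rw [← hform i hin]
    exact hcB i hin


end Stmt10

theorem stmt10 (A : Finset ℤ) (k h m r : ℕ)
    (hk5 : 5 ≤ k) (hA : A.card = k)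
    (hr : 2 ≤ r) (hm : 2 ≤ m) (hh : h = m * r)
    (hmk : m ≤ k - 1) (h2 : h ≤ r * k - 2)
    (heq : (genSum r h A).ncard = h * (k - m) + 1) :
    IsAPSet (genSum 1 m A) := by
  classical
  have hkm : m < k := by omega
  set B := Stmt10.rsum m A with hBdef
  have hBne : B.Nonempty := by
    obtain ⟨S, hS⟩ : (A.powersetCard m).Nonempty := by
      rw [Finset.powersetCard_nonempty, hA]
      omega
    exact ⟨S.sum id, mem_image.2 ⟨S, hS, rfl⟩⟩
  have hone : genSum 1 m A = ↑B := Stmt10.genSum_one m A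
  have hrh : genSum r h A = ↑(Stmt10.itS r B) := by
    rw [hh]; exact Stmt10.genSum_eq_itS m A r
  have hcard1 : (Stmt10.itS r B).card = h*(k-m)+1 := by
    rw [hrh, Set.ncard_coe_finset] at heq
    exact heq
  set n := B.card with hndef
  have hnlow : m*(k-m)+1 ≤ n := Stmt10.card_rsum_ge A k m hA (by omega) hkm
  have hub := Stmt10.card_itS_ge B hBne r
  rw [← hndef] at hub
  have e1 : h*(k-m) = r*(m*(k-m)) := by rw [hh]; ring
  have e2 : r*(m*(k-m)+1) = r*(m*(k-m)) + r := by ring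
  have h3 : r * n ≤ r * (m*(k-m)+1) := by omega
  have hle : n ≤ m*(k-m)+1 := Nat.le_of_mul_le_mul_left h3 (by omega)
  have hn_eq : n = m*(k-m)+1 := by omega
  -- extract |B+B| = 2n-1
  set r' := r - 2 with hr'def
  have hr'e : r = r' + 2 := by omega
  have hsplit : Stmt10.itS r B = Stmt10.itS r' B + (B+B) := by
    rw [hr'e]
    show (Stmt10.itS r' B + B) + B = Stmt10.itS r' B + (B+B)
    rw [add_assoc]
  have c1 : (Stmt10.itS r' B).card + (B+B).card - 1 ≤ (Stmt10.itS r B).card := by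
    rw [hsplit]
    exact cauchy_davenport_add_of_linearOrder_isCancelAdd
      (Stmt10.itS_nonempty B hBne r') (hBne.add hBne)
  have c2 := Stmt10.card_itS_ge B hBne r'
  rw [← hndef] at c2
  have c3 : n + n - 1 ≤ (B+B).card :=
    cauchy_davenport_add_of_linearOrder_isCancelAdd hBne hBne
  have e3 : r*n = r'*n + 2*n := by rw [hr'e]; ring
  have e5 : r*n = r*(m*(k-m)) + r := by rw [hn_eq]; ring
  have hP2 : 2*1 ≤ m*(k-m) := Nat.mul_le_mul (by omega) (by omega)
  have hn2 : 2 ≤ n := by omega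
  have hBB : (B+B).card = 2*n - 1 := by omega
  rw [hone]
  exact Stmt10.freiman B n hn2 hndef.symm hBB
end

section
/- Let A = {a_1 < ... < a_k} be a finite set of integers, h = m·r + ε with 1 ≤ ε ≤ r − 1 and m + ε ≤ k. Then the minimum of h^(r)A equals r·(a_1 + ... + a_m) + ε·a_{m+1}, and the minimum of the subset B = (r−1)·(m^∧A) + (m+ε)^∧A equals r·(a_1 + ... + a_m) + a_{m+1} + ... + a_{m+ε}. -/
open Finset Pointwise

/-- Abel-summation style lower bound: if all prefix sums of `e` are nonpositive
and `a` is weakly increasing on `[0, n)`, then `∑ e i * a i ≥ (∑ e i) * a (n-1)`. -/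
private lemma abel_aux (a e : ℕ → ℤ) :
    ∀ n : ℕ, (∀ i, i + 1 < n → a i ≤ a (i + 1)) →
      (∀ j, j ≤ n → ∑ i ∈ Finset.range j, e i ≤ 0) →
      (∑ i ∈ Finset.range n, e i) * a (n - 1) ≤ ∑ i ∈ Finset.range n, e i * a i := by
  intro n
  induction n with
  | zero => simp
  | succ n ih =>
    intro hmono hpre
    have h1 := ih (fun i hi => hmono i (by omega)) (fun j hj => hpre j (by omega))
    have hE : ∑ i ∈ Finset.range n, e i ≤ 0 := hpre n (by omega)
    have han : a (n - 1) ≤ a n := by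
      rcases Nat.eq_zero_or_pos n with h | h
      · subst h; simp
      · have := hmono (n - 1) (by omega)
        rwa [Nat.sub_add_cancel h] at this
    have key : (∑ i ∈ Finset.range n, e i) * a n ≤ (∑ i ∈ Finset.range n, e i) * a (n - 1) :=
      mul_le_mul_of_nonpos_left han hE
    rw [Finset.sum_range_succ, Finset.sum_range_succ]
    simp only [Nat.add_sub_cancel]
    rw [add_mul]
    linarith

private lemma dominance (a : ℕ → ℤ) (k : ℕ)
    (hmono : ∀ i, i + 1 < k → a i ≤ a (i + 1)) (u v : ℕ → ℤ)
    (hpre : ∀ j, j ≤ k → ∑ i ∈ Finset.range j, v i ≤ ∑ i ∈ Finset.range j, u i)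
    (htot : ∑ i ∈ Finset.range k, v i = ∑ i ∈ Finset.range k, u i) :
    ∑ i ∈ Finset.range k, u i * a i ≤ ∑ i ∈ Finset.range k, v i * a i := by
  have h := abel_aux a (fun i => v i - u i) k hmono ?_
  · simp only [sub_mul, Finset.sum_sub_distrib, htot, sub_self, zero_mul] at h
    linarith
  · intro j hj
    simp only [Finset.sum_sub_distrib, sub_nonpos]
    exact hpre j hj

/-- The optimal coefficient pattern: `r` copies of the `m` smallest, then `ε` copies. -/
private def dfun (r m ε : ℕ) (i : ℕ) : ℕ := if i < m then r else if i = m then ε else 0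

private lemma sum_dfun (r m ε n : ℕ) (h : m < n ∨ (ε = 0 ∧ m ≤ n)) :
    ∑ i ∈ Finset.range n, dfun r m ε i = m * r + ε := by
  have hmn : m ≤ n := by omega
  rw [← Finset.sum_range_add_sum_Ico _ hmn]
  have h1 : ∑ i ∈ Finset.range m, dfun r m ε i = m * r := by
    have hc : ∀ i ∈ Finset.range m, dfun r m ε i = r := by
      intro i hi
      rw [Finset.mem_range] at hi
      unfold dfun; rw [if_pos hi]
    rw [Finset.sum_congr rfl hc, Finset.sum_const, Finset.card_range, smul_eq_mul]
  have h2 : ∑ i ∈ Finset.Ico m n, dfun r m ε i = ε := by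
    have hc : ∀ i ∈ Finset.Ico m n, dfun r m ε i = if i = m then ε else 0 := by
      intro i hi
      rw [Finset.mem_Ico] at hi
      unfold dfun; rw [if_neg (by omega)]
    rw [Finset.sum_congr rfl hc, Finset.sum_ite_eq' (Finset.Ico m n) m fun _ => ε]
    rcases h with h | ⟨h0, _⟩
    · rw [if_pos (by rw [Finset.mem_Ico]; omega)]
    · subst h0; simp
  rw [h1, h2]

private lemma dfun_sum_eq (a : ℕ → ℤ) (r m ε k : ℕ) (hmk : m < k) :
    ∑ i ∈ Finset.range k, (dfun r m ε i : ℤ) * a i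
      = (r : ℤ) * ∑ i ∈ Finset.range m, a i + (ε : ℤ) * a m := by
  rw [← Finset.sum_range_add_sum_Ico _ (show m + 1 ≤ k by omega)]
  have h2 : ∑ i ∈ Finset.Ico (m + 1) k, (dfun r m ε i : ℤ) * a i = 0 :=
    Finset.sum_eq_zero fun i hi => by
      rw [Finset.mem_Ico] at hi
      unfold dfun
      rw [if_neg (by omega), if_neg (by omega)]
      simp
  rw [h2, add_zero, Finset.sum_range_succ]
  have h1 : ∑ i ∈ Finset.range m, (dfun r m ε i : ℤ) * a i
      = (r : ℤ) * ∑ i ∈ Finset.range m, a i := by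
    rw [Finset.mul_sum]
    refine Finset.sum_congr rfl fun i hi => ?_
    rw [Finset.mem_range] at hi
    unfold dfun; rw [if_pos hi]
  rw [h1]
  unfold dfun; rw [if_neg (lt_irrefl m), if_pos rfl]

private lemma dfun_sum_eq0 (a : ℕ → ℤ) (r m k : ℕ) (hmk : m ≤ k) :
    ∑ i ∈ Finset.range k, (dfun r m 0 i : ℤ) * a i
      = (r : ℤ) * ∑ i ∈ Finset.range m, a i := by
  rw [← Finset.sum_range_add_sum_Ico _ hmk]
  have h2 : ∑ i ∈ Finset.Ico m k, (dfun r m 0 i : ℤ) * a i = 0 :=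
    Finset.sum_eq_zero fun i hi => by
      rw [Finset.mem_Ico] at hi
      unfold dfun
      rw [if_neg (by omega)]
      split_ifs <;> simp
  rw [h2, add_zero, Finset.mul_sum]
  refine Finset.sum_congr rfl fun i hi => ?_
  rw [Finset.mem_range] at hi
  unfold dfun; rw [if_pos hi]

private lemma genSum_least (a : ℕ → ℤ) (k : ℕ)
    (ha : StrictMonoOn a (Finset.range k : Set ℕ))
    (A : Finset ℤ) (hA : A = (Finset.range k).image a)
    (r m ε : ℕ) (hεr : ε ≤ r) (hmk : m ≤ k) (hcond : ε = 0 ∨ m < k) :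
    IsLeast (genSum r (m * r + ε) A)
      (∑ i ∈ Finset.range k, (dfun r m ε i : ℤ) * a i) := by
  classical
  have hinj : ∀ x ∈ Finset.range k, ∀ y ∈ Finset.range k, a x = a y → x = y :=
    fun x hx y hy hxy => ha.injOn (by simpa using hx) (by simpa using hy) hxy
  have hdcond : m < k ∨ (ε = 0 ∧ m ≤ k) := hcond.elim (fun h => Or.inr ⟨h, hmk⟩) Or.inl
  constructor
  · -- membership
    refine ⟨fun x => ∑ i ∈ Finset.range k, if a i = x then dfun r m ε i else 0, ?_, ?_, ?_, ?_⟩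
    · intro x
      show (∑ i ∈ Finset.range k, if a i = x then dfun r m ε i else 0) ≤ r
      by_cases hx : ∃ i ∈ Finset.range k, a i = x
      · obtain ⟨i₀, hi₀, hai₀⟩ := hx
        have heq : (∑ i ∈ Finset.range k, if a i = x then dfun r m ε i else 0)
            = if a i₀ = x then dfun r m ε i₀ else 0 :=
          Finset.sum_eq_single_of_mem i₀ hi₀
            (fun j hj hji => if_neg fun hh => hji (hinj j hj i₀ hi₀ (hh.trans hai₀.symm)))
        rw [if_pos hai₀] at heq
        rw [heq]
        unfold dfun; split_ifs <;> omega
      · push_neg at hx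
        rw [Finset.sum_eq_zero (fun i hi => if_neg (hx i hi))]
        exact Nat.zero_le r
    · intro x hx
      by_contra hxA
      apply hx
      show (∑ i ∈ Finset.range k, if a i = x then dfun r m ε i else 0) = 0
      refine Finset.sum_eq_zero fun i hi => ?_
      have : a i ≠ x := fun hh => hxA (hh ▸ (hA ▸ Finset.mem_image_of_mem a hi))
      rw [if_neg this]
    · show (∑ x ∈ A, ∑ i ∈ Finset.range k, if a i = x then dfun r m ε i else 0) = m * r + ε
      rw [Finset.sum_comm]
      have hc : ∀ i ∈ Finset.range k,
          (∑ x ∈ A, if a i = x then dfun r m ε i else 0) = dfun r m ε i := by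
        intro i hi
        have haiA : a i ∈ A := hA ▸ Finset.mem_image_of_mem a hi
        have heq : (∑ x ∈ A, if a i = x then dfun r m ε i else 0)
            = if a i = a i then dfun r m ε i else 0 :=
          Finset.sum_eq_single_of_mem (a i) haiA
            (fun x _ hx => if_neg fun hh => hx hh.symm)
        rw [if_pos rfl] at heq
        exact heq
      rw [Finset.sum_congr rfl hc]
      exact sum_dfun r m ε k hdcond
    · show (∑ x ∈ A, (∑ i ∈ Finset.range k, if a i = x then dfun r m ε i else 0) • x)
        = ∑ i ∈ Finset.range k, (dfun r m ε i : ℤ) * a i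
      rw [show (∑ x ∈ A, (∑ i ∈ Finset.range k, if a i = x then dfun r m ε i else 0) • x)
          = ∑ x ∈ A, ∑ i ∈ Finset.range k, (if a i = x then dfun r m ε i else 0) • x from
        Finset.sum_congr rfl fun x _ => Finset.sum_smul, Finset.sum_comm]
      refine Finset.sum_congr rfl fun i hi => ?_
      have haiA : a i ∈ A := hA ▸ Finset.mem_image_of_mem a hi
      have heq : (∑ x ∈ A, (if a i = x then dfun r m ε i else 0) • x)
          = (if a i = a i then dfun r m ε i else 0) • (a i) :=
        Finset.sum_eq_single_of_mem (a i) haiA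
          (fun x _ hx => by
            show (if a i = x then dfun r m ε i else 0) • x = 0
            rw [if_neg fun hh => hx hh.symm, zero_smul])
      rw [if_pos rfl] at heq
      rw [heq, nsmul_eq_mul]
  · -- lower bound
    intro x hx
    obtain ⟨c, hcr, _, hcsum, hcx⟩ := hx
    have hmono : ∀ i, i + 1 < k → a i ≤ a (i + 1) := fun i hi =>
      (ha (by simpa using (by omega : i < k)) (by simpa using hi) (by omega)).le
    have h1 : ∑ i ∈ Finset.range k, c (a i) = m * r + ε := by
      rw [← hcsum, hA, Finset.sum_image hinj]
    have h2 : ∑ i ∈ Finset.range k, (c (a i) : ℤ) * a i = x := by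
      rw [← hcx, hA, Finset.sum_image hinj]
      exact Finset.sum_congr rfl fun i _ => (nsmul_eq_mul _ _)
    have hd := dominance a k hmono (fun i => (dfun r m ε i : ℤ)) (fun i => (c (a i) : ℤ)) ?_ ?_
    · rw [h2] at hd
      exact hd
    · intro j hj
      have hnat : ∑ i ∈ Finset.range j, c (a i) ≤ ∑ i ∈ Finset.range j, dfun r m ε i := by
        rcases le_or_gt j m with hjm | hjm
        · calc ∑ i ∈ Finset.range j, c (a i) ≤ ∑ _i ∈ Finset.range j, r :=
                Finset.sum_le_sum fun i _ => hcr (a i)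
          _ = ∑ i ∈ Finset.range j, dfun r m ε i := by
              refine Finset.sum_congr rfl fun i hi => ?_
              rw [Finset.mem_range] at hi
              unfold dfun; rw [if_pos (by omega)]
        · calc ∑ i ∈ Finset.range j, c (a i) ≤ ∑ i ∈ Finset.range k, c (a i) :=
                Finset.sum_le_sum_of_subset (Finset.range_subset_range.mpr hj)
          _ = m * r + ε := h1
          _ = ∑ i ∈ Finset.range j, dfun r m ε i := (sum_dfun r m ε j (Or.inl hjm)).symm
      exact_mod_cast hnat
    · have hnat : ∑ i ∈ Finset.range k, c (a i) = ∑ i ∈ Finset.range k, dfun r m ε i := by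
        rw [h1, sum_dfun r m ε k hdcond]
      exact_mod_cast hnat

theorem stmt14 (a : ℕ → ℤ) (k h m r ε : ℕ)
    (ha : StrictMonoOn a (Finset.range k : Set ℕ))
    (A : Finset ℤ) (hA : A = (Finset.range k).image a)
    (hh : h = m * r + ε) (hε1 : 1 ≤ ε) (hε2 : ε ≤ r - 1) (hmk : m + ε ≤ k) :
    IsLeast (genSum r h A) ((r : ℤ) * (∑ i ∈ Finset.range m, a i) + (ε : ℤ) * a m) ∧
    IsLeast (iterSum (r - 1) (genSum 1 m A) + genSum 1 (m + ε) A)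
      ((r : ℤ) * (∑ i ∈ Finset.range m, a i) + ∑ i ∈ Finset.Ico m (m + ε), a i) := by
  have hr2 : 2 ≤ r := by omega
  have hm_lt : m < k := by omega
  constructor
  · have H := genSum_least a k ha A hA r m ε (by omega) (by omega) (Or.inr hm_lt)
    rw [dfun_sum_eq a r m ε k hm_lt] at H
    rw [hh]
    exact H
  · have H1 := genSum_least a k ha A hA 1 m 0 (by omega) (by omega) (Or.inl rfl)
    have H2 := genSum_least a k ha A hA 1 (m + ε) 0 (by omega) hmk (Or.inl rfl)
    rw [dfun_sum_eq0 a 1 m k (by omega)] at H1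
    rw [dfun_sum_eq0 a 1 (m + ε) k hmk] at H2
    simp only [mul_one, add_zero, Nat.cast_one, one_mul] at H1 H2
    have hsplit : ∑ i ∈ Finset.range (m + ε), a i
        = (∑ i ∈ Finset.range m, a i) + ∑ i ∈ Finset.Ico m (m + ε), a i :=
      (Finset.sum_range_add_sum_Ico _ (by omega : m ≤ m + ε)).symm
    have hc : ((r - 1 : ℕ) : ℤ) = (r : ℤ) - 1 := by omega
    constructor
    · refine Set.mem_add.mpr ⟨(r - 1 : ℕ) • (∑ i ∈ Finset.range m, a i), ?_,
        ∑ i ∈ Finset.range (m + ε), a i, H2.1, ?_⟩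
      · exact ⟨fun _ => ∑ i ∈ Finset.range m, a i, fun _ => H1.1, by
          simp [Finset.sum_const, Finset.card_univ]⟩
      · rw [hsplit, nsmul_eq_mul, hc]
        ring
    · intro x hx
      obtain ⟨y, hy, z, hz, hyz⟩ := Set.mem_add.mp hx
      obtain ⟨f, hf, hfy⟩ := hy
      have hy' : ((r - 1 : ℕ) : ℤ) * (∑ i ∈ Finset.range m, a i) ≤ y := by
        rw [← hfy]
        calc ((r - 1 : ℕ) : ℤ) * (∑ i ∈ Finset.range m, a i)
            = ∑ _i : Fin (r - 1), ∑ i ∈ Finset.range m, a i := by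
              simp [Finset.sum_const, Finset.card_univ, nsmul_eq_mul]
          _ ≤ ∑ i, f i := Finset.sum_le_sum fun i _ => H1.2 (hf i)
      have hz' : ∑ i ∈ Finset.range (m + ε), a i ≤ z := H2.2 hz
      rw [hc] at hy'
      have hy'' : (r : ℤ) * (∑ i ∈ Finset.range m, a i) - (∑ i ∈ Finset.range m, a i) ≤ y := by
        rw [sub_mul, one_mul] at hy'
        exact hy'
      rw [← hyz]
      linarith [hsplit.ge, hsplit.le]
end
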